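/- arXiv:2104.06606 — 8 statements merged into one kernel-verified Lean document; each statement's English description precedes it below -/
import Mathlib

section
/- Let B ∈ ℝ^{n×n} be an irreducible nonsingular M-matrix and β > 0. If (u, λ) is a positive eigenpair of β·diag(u^[2])u + Bu = λu with uᵀu = 1, then the Jacobian matrix J(u, λ) = β·diag(u^[2]) + B − λI + 2β·diag(u^[2]) = 3β·diag(u^[2]) + B − λI is a nonsingular M-matrix; in particular it is invertible. -/
open Matrix Filter Topology

/-- Spectral radius of a real matrix (over its complex spectrum). -/
noncomputable def specRad {n : ℕ} (A : Matrix (Fin n) (Fin n) ℝ) : ℝ :=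
  sSup {r : ℝ | ∃ μ : ℂ, μ ∈ spectrum ℂ (A.map (fun x => (x : ℂ))) ∧ r = ‖μ‖}

/-- Entrywise nonnegative matrix. -/
def MatNonneg {n : ℕ} (A : Matrix (Fin n) (Fin n) ℝ) : Prop := ∀ i j, 0 ≤ A i j

/-- `B` is an M-matrix: `B = s•I - A` with `A ≥ 0` and `s ≥ ρ(A)`. -/
def IsMMat {n : ℕ} (B : Matrix (Fin n) (Fin n) ℝ) : Prop :=
  ∃ s A, MatNonneg A ∧ specRad A ≤ s ∧ B = s • (1 : Matrix (Fin n) (Fin n) ℝ) - A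

/-- `B` is a nonsingular M-matrix: `B = s•I - A` with `A ≥ 0` and `s > ρ(A)`. -/
def IsNsMMat {n : ℕ} (B : Matrix (Fin n) (Fin n) ℝ) : Prop :=
  ∃ s A, MatNonneg A ∧ specRad A < s ∧ B = s • (1 : Matrix (Fin n) (Fin n) ℝ) - A

/-- Irreducibility: no nonempty proper index set `I` with `B i j = 0` for `i ∈ I`, `j ∉ I`. -/
def MatIrred {n : ℕ} (B : Matrix (Fin n) (Fin n) ℝ) : Prop :=
  ¬ ∃ I : Finset (Fin n), I.Nonempty ∧ I ≠ Finset.univ ∧ ∀ i ∈ I, ∀ j ∉ I, B i j = 0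

/-- `A(u) = β·diag(u^[2]) + B`. -/
noncomputable def AU {n : ℕ} (β : ℝ) (B : Matrix (Fin n) (Fin n) ℝ) (u : Fin n → ℝ) :
    Matrix (Fin n) (Fin n) ℝ :=
  β • Matrix.diagonal (fun i => u i ^ 2) + B

/-- Jacobian `J(u,λ) = 3β·diag(u^[2]) + B - λI`. -/
noncomputable def JU {n : ℕ} (β lam : ℝ) (B : Matrix (Fin n) (Fin n) ℝ) (u : Fin n → ℝ) :
    Matrix (Fin n) (Fin n) ℝ :=
  (3 * β) • Matrix.diagonal (fun i => u i ^ 2) + B - lam • (1 : Matrix (Fin n) (Fin n) ℝ)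

/-- Smallest (real) eigenvalue. -/
noncomputable def smallestEig {n : ℕ} (B : Matrix (Fin n) (Fin n) ℝ) : ℝ :=
  sInf {μ : ℝ | ∃ v : Fin n → ℝ, v ≠ 0 ∧ B.mulVec v = μ • v}

/-- Largest (real) eigenvalue. -/
noncomputable def largestEig {n : ℕ} (B : Matrix (Fin n) (Fin n) ℝ) : ℝ :=
  sSup {μ : ℝ | ∃ v : Fin n → ℝ, v ≠ 0 ∧ B.mulVec v = μ • v}

/-- Euclidean norm of a vector. -/
noncomputable def vecNorm {n : ℕ} (u : Fin n → ℝ) : ℝ := Real.sqrt (∑ i, u i ^ 2)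

/-- 1-norm of a vector. -/
noncomputable def vecNorm1 {n : ℕ} (u : Fin n → ℝ) : ℝ := ∑ i, |u i|

/-- Spectral (operator 2-) norm of a matrix. -/
noncomputable def matNorm {n : ℕ} (A : Matrix (Fin n) (Fin n) ℝ) : ℝ :=
  sSup {r : ℝ | ∃ x : Fin n → ℝ, vecNorm x ≤ 1 ∧ r = vecNorm (A.mulVec x)}

lemma mem_spectrum_eigvec {n : ℕ} (M : Matrix (Fin n) (Fin n) ℂ) (μ : ℂ)
    (h : μ ∈ spectrum ℂ M) : ∃ v : Fin n → ℂ, v ≠ 0 ∧ M.mulVec v = μ • v := by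
  rw [spectrum.mem_iff, Matrix.isUnit_iff_isUnit_det, isUnit_iff_ne_zero, not_not] at h
  obtain ⟨v, hv, hdv⟩ := Matrix.exists_mulVec_eq_zero_iff.mpr h
  refine ⟨v, hv, ?_⟩
  have h2 : (algebraMap ℂ (Matrix (Fin n) (Fin n) ℂ)) μ *ᵥ v = μ • v := by
    show (Matrix.diagonal fun _ => μ) *ᵥ v = μ • v
    ext i; simp [Matrix.mulVec_diagonal]
  rw [Matrix.sub_mulVec, h2, sub_eq_zero] at hdv
  exact hdv.symm

/-- Weighted row-sum bound on eigenvalue moduli of a nonnegative matrix. -/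
lemma abs_eig_le {n : ℕ} (N : Matrix (Fin n) (Fin n) ℝ) (hN : MatNonneg N)
    (u : Fin n → ℝ) (hu : ∀ i, 0 < u i) (c : ℝ)
    (h : ∀ i, N.mulVec u i ≤ c * u i) (μ : ℂ)
    (hμ : μ ∈ spectrum ℂ (N.map (fun x => (x : ℂ)))) : ‖μ‖ ≤ c := by
  obtain ⟨v, hv, heig⟩ := mem_spectrum_eigvec _ _ hμ
  obtain ⟨j0, hj0⟩ := Function.ne_iff.mp hv
  have hne : (Finset.univ : Finset (Fin n)).Nonempty := ⟨j0, Finset.mem_univ _⟩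
  obtain ⟨i, -, hi⟩ := Finset.exists_max_image Finset.univ
    (fun j => ‖v j‖ / u j) hne
  have hvi : 0 < ‖v i‖ := by
    have h1 : 0 < ‖v j0‖ / u j0 :=
      div_pos (by simpa using hj0) (hu j0)
    have h2 := hi j0 (Finset.mem_univ _)
    by_contra hcon
    push_neg at hcon
    have : ‖v i‖ = 0 := le_antisymm hcon (norm_nonneg _)
    rw [this] at h2
    simp at h2
    linarith
  set K := ‖v i‖ / u i with hK
  have hKnn : 0 ≤ K := div_nonneg (norm_nonneg _) (hu i).le
  have hrow : ∑ j, (N i j : ℂ) * v j = μ * v i := by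
    have := congrFun heig i
    simpa [Matrix.mulVec, dotProduct, Matrix.map_apply, Pi.smul_apply,
      smul_eq_mul] using this
  have key : ‖μ‖ * ‖v i‖ ≤ c * ‖v i‖ := by
    calc ‖μ‖ * ‖v i‖ = ‖∑ j, (N i j : ℂ) * v j‖ := by
          rw [hrow, norm_mul]
      _ ≤ ∑ j, ‖(N i j : ℂ) * v j‖ := norm_sum_le _ _
      _ = ∑ j, N i j * ‖v j‖ := by
          apply Finset.sum_congr rfl; intro j _
          rw [norm_mul, Complex.norm_real, Real.norm_eq_abs, abs_of_nonneg (hN i j)]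
      _ ≤ ∑ j, N i j * (K * u j) := by
          apply Finset.sum_le_sum; intro j _
          apply mul_le_mul_of_nonneg_left _ (hN i j)
          have := hi j (Finset.mem_univ _)
          calc ‖v j‖ = ‖v j‖ / u j * u j := by
                rw [div_mul_cancel₀ _ (hu j).ne']
            _ ≤ K * u j := mul_le_mul_of_nonneg_right this (hu j).le
      _ = K * (N.mulVec u i) := by
          rw [Matrix.mulVec, dotProduct, Finset.mul_sum]
          apply Finset.sum_congr rfl; intro j _; ring
      _ ≤ K * (c * u i) := mul_le_mul_of_nonneg_left (h i) hKnn
      _ = c * ‖v i‖ := by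
          rw [hK]
          field_simp [(hu i).ne']
  exact le_of_mul_le_mul_right key hvi


theorem stmt2 {n : ℕ} [NeZero n] (B : Matrix (Fin n) (Fin n) ℝ) (β lam : ℝ)
    (u : Fin n → ℝ) (hB1 : MatIrred B) (hB2 : IsNsMMat B) (hβ : 0 < β)
    (hu : ∀ i, 0 < u i) (hnorm : ∑ i, u i ^ 2 = 1)
    (heig : (AU β B u).mulVec u = lam • u) :
    IsNsMMat (JU β lam B u) ∧ IsUnit (JU β lam B u) := by
  obtain ⟨s, A, hA, hsA, hBeq⟩ := hB2
  set r : ℝ := s - lam + 3 * β with hr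
  set C : Matrix (Fin n) (Fin n) ℝ :=
    A + (3 * β) • Matrix.diagonal (fun i => 1 - u i ^ 2) with hC
  have hu2 : ∀ i, u i ^ 2 ≤ 1 := fun i => by
    rw [← hnorm]
    exact Finset.single_le_sum (fun j _ => sq_nonneg (u j)) (Finset.mem_univ i)
  have hCnn : MatNonneg C := by
    intro i j
    rcases eq_or_ne i j with rfl | hij
    · have h1 := hA i i
      have h2 := hu2 i
      simp only [hC, Matrix.add_apply, Matrix.smul_apply, Matrix.diagonal_apply_eq,
        smul_eq_mul]
      nlinarith
    · simp only [hC, Matrix.add_apply, Matrix.smul_apply,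
        Matrix.diagonal_apply_ne _ hij, smul_eq_mul, mul_zero, add_zero]
      exact hA i j
  have hJU : JU β lam B u = r • 1 - C := by
    rw [JU, hBeq]
    ext i j
    rcases eq_or_ne i j with rfl | hij
    · simp only [hC, hr, Matrix.sub_apply, Matrix.add_apply, Matrix.smul_apply,
        Matrix.diagonal_apply_eq, Matrix.one_apply_eq, smul_eq_mul]
      ring
    · simp only [hC, hr, Matrix.sub_apply, Matrix.add_apply, Matrix.smul_apply,
        Matrix.diagonal_apply_ne _ hij, Matrix.one_apply_ne hij, smul_eq_mul]
      ring
  have hBu : ∀ i, B.mulVec u i = lam * u i - β * u i ^ 3 := by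
    intro i
    have h0 := congrFun heig i
    simp only [AU, Matrix.add_mulVec, Matrix.smul_mulVec, Pi.add_apply,
      Pi.smul_apply, Matrix.mulVec_diagonal, smul_eq_mul] at h0
    nlinarith [h0]
  have hAu : ∀ i, A.mulVec u i = s * u i - (lam * u i - β * u i ^ 3) := by
    intro i
    have : A.mulVec u = s • u - B.mulVec u := by
      have : A = s • (1 : Matrix (Fin n) (Fin n) ℝ) - B := by rw [hBeq]; abel
      rw [this, Matrix.sub_mulVec, Matrix.smul_mulVec, Matrix.one_mulVec]
    rw [congrFun this i, ← hBu i]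
    simp [Pi.sub_apply, Pi.smul_apply, smul_eq_mul]
  have hCu : ∀ i, C.mulVec u i = r * u i - 2 * β * u i ^ 3 := by
    intro i
    simp only [hC, Matrix.add_mulVec, Matrix.smul_mulVec, Pi.add_apply,
      Pi.smul_apply, Matrix.mulVec_diagonal, smul_eq_mul, hAu i, hr]
    ring
  obtain ⟨i0, -, hi0⟩ := Finset.exists_min_image Finset.univ (fun i => u i ^ 2)
    (Finset.univ_nonempty)
  set c : ℝ := r - 2 * β * u i0 ^ 2 with hc
  have hcb : ∀ i, C.mulVec u i ≤ c * u i := by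
    intro i
    rw [hCu i, hc]
    have hm := hi0 i (Finset.mem_univ i)
    have hui := hu i
    nlinarith [mul_le_mul_of_nonneg_right hm hui.le, sq_nonneg (u i)]
  have hc0 : 0 ≤ c := by
    have hnn : 0 ≤ C.mulVec u i0 := by
      rw [Matrix.mulVec, dotProduct]
      exact Finset.sum_nonneg fun j _ => mul_nonneg (hCnn i0 j) (hu j).le
    rw [hCu i0] at hnn
    have hui := hu i0
    nlinarith
  have hbd : ∀ x ∈ {r' : ℝ | ∃ μ : ℂ,
      μ ∈ spectrum ℂ (C.map (fun x => (x : ℂ))) ∧ r' = ‖μ‖}, x ≤ c := by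
    rintro x ⟨μ, hμ, rfl⟩
    exact abs_eig_le C hCnn u hu c hcb μ hμ
  have hspec : specRad C ≤ c := Real.sSup_le hbd hc0
  have hcr : c < r := by
    have h1 : 0 < 2 * β * u i0 ^ 2 := mul_pos (by linarith) (pow_pos (hu i0) 2)
    rw [hc]; linarith
  refine ⟨⟨r, C, hCnn, lt_of_le_of_lt hspec hcr, hJU⟩, ?_⟩
  rw [hJU, Matrix.isUnit_iff_isUnit_det, isUnit_iff_ne_zero]
  intro hdet
  have hdetC : ((algebraMap ℂ (Matrix (Fin n) (Fin n) ℂ)) (r : ℂ)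
      - C.map (fun x => (x : ℂ))).det = 0 := by
    have hmap : (algebraMap ℂ (Matrix (Fin n) (Fin n) ℂ)) (r : ℂ)
        - C.map (fun x => (x : ℂ))
        = Complex.ofRealHom.mapMatrix (r • 1 - C) := by
      ext i j
      rcases eq_or_ne i j with rfl | hij
      · simp [Matrix.algebraMap_matrix_apply, Matrix.one_apply_eq]
      · simp [Matrix.algebraMap_matrix_apply, hij, Matrix.one_apply_ne hij]
    rw [hmap, ← RingHom.map_det, hdet, map_zero]
  have hμ : (r : ℂ) ∈ spectrum ℂ (C.map (fun x => (x : ℂ))) := by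
    rw [spectrum.mem_iff, Matrix.isUnit_iff_isUnit_det, isUnit_iff_ne_zero, not_not]
    exact hdetC
  have hrle : r ≤ specRad C := by
    apply le_csSup ⟨c, hbd⟩
    exact ⟨(r : ℂ), hμ, by rw [Complex.norm_real, Real.norm_eq_abs, abs_of_nonneg (le_trans hc0 hcr.le)]⟩
  linarith
end

section
/- Let B ∈ ℝ^{n×n} be a symmetric irreducible nonsingular M-matrix, β > 0, and λ > λ_min(B). Then the equation β·diag(u^[2])u + Bu = λu has a unique positive solution u(λ) > 0 (with no normalization constraint). -/
open Matrix Filter Topology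

section Aux

open Finset

variable {n : ℕ}

/-- The energy functional. -/
noncomputable def Efun (B : Matrix (Fin n) (Fin n) ℝ) (β lam : ℝ) (u : Fin n → ℝ) : ℝ :=
  (1/2) * ∑ i, ∑ j, B i j * u i * u j + (β/4) * ∑ i, u i ^ 4 - (lam/2) * ∑ i, u i ^ 2

lemma Efun_continuous (B : Matrix (Fin n) (Fin n) ℝ) (β lam : ℝ) :
    Continuous (Efun B β lam) := by
  unfold Efun
  fun_prop

lemma mulVec_apply' (B : Matrix (Fin n) (Fin n) ℝ) (u : Fin n → ℝ) (i : Fin n) :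
    B.mulVec u i = ∑ j, B i j * u j := by
  simp [Matrix.mulVec, dotProduct]

lemma offdiag_nonpos {B : Matrix (Fin n) (Fin n) ℝ} (h : IsNsMMat B) :
    ∀ i j, i ≠ j → B i j ≤ 0 := by
  obtain ⟨s, A, hA, -, rfl⟩ := h
  intro i j hij
  have := hA i j
  simp [Matrix.sub_apply, Matrix.smul_apply, Matrix.one_apply, hij]
  linarith

lemma eqn_iff (β lam : ℝ) (B : Matrix (Fin n) (Fin n) ℝ) (u : Fin n → ℝ) :
    (AU β B u).mulVec u = lam • u ↔ ∀ i, β * u i ^ 3 + B.mulVec u i = lam * u i := by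
  constructor
  · intro h i
    have h2 := congrFun h i
    simp [AU, Matrix.add_mulVec, Matrix.smul_mulVec, Matrix.mulVec_diagonal,
      smul_eq_mul] at h2
    have h3 : β * u i ^ 3 = β * (u i ^ 2 * u i) := by ring
    linarith
  · intro h
    funext i
    have h2 := h i
    simp [AU, Matrix.add_mulVec, Matrix.smul_mulVec, Matrix.mulVec_diagonal,
      smul_eq_mul]
    have h3 : β * u i ^ 3 = β * (u i ^ 2 * u i) := by ring
    linarith

lemma update_hasDerivAt (m : Fin n → ℝ) (i j : Fin n) :
    HasDerivAt (fun x : ℝ => Function.update m i x j) (if j = i then 1 else 0) (m i) := by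
  rcases eq_or_ne j i with rfl | hj
  · simpa [Function.update_self] using (hasDerivAt_id' (m j))
  · simpa [Function.update_of_ne hj, hj] using (hasDerivAt_const (m i) (m j))

lemma EL {B : Matrix (Fin n) (Fin n) ℝ} (hB1 : B.IsSymm) {β lam : ℝ}
    {m : Fin n → ℝ} (hmin : IsLocalMin (Efun B β lam) m) (i : Fin n) :
    β * m i ^ 3 + B.mulVec m i = lam * m i := by
  classical
  have hgc : Continuous (fun x : ℝ => Function.update m i x) := by
    apply continuous_pi
    intro j
    rcases eq_or_ne j i with rfl | hj
    · simpa [Function.update_self] using (continuous_id' : Continuous fun x : ℝ => x)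
    · simpa [Function.update_of_ne hj] using (continuous_const : Continuous fun _ : ℝ => m j)
  have h0 : Function.update m i (m i) = m := Function.update_eq_self i m
  have hloc : IsLocalMin (Efun B β lam ∘ (fun x : ℝ => Function.update m i x)) (m i) := by
    have h' := hmin
    rw [← h0] at h'
    exact h'.comp_continuous hgc.continuousAt
  have hS1 : HasDerivAt (fun x => ∑ j, ∑ k, B j k * Function.update m i x j * Function.update m i x k)
      (∑ j, ∑ k, (B j k * (if j = i then 1 else 0) * m k
        + B j k * m j * (if k = i then 1 else 0))) (m i) := by
    apply HasDerivAt.fun_sum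
    intro j _
    apply HasDerivAt.fun_sum
    intro k _
    have h1 := (update_hasDerivAt m i j).const_mul (B j k)
    have h2 := update_hasDerivAt m i k
    have h3 := h1.fun_mul h2
    simpa [h0] using h3
  have hsum1 : (∑ j, ∑ k, (B j k * (if j = i then 1 else 0) * m k
      + B j k * m j * (if k = i then 1 else 0))) = 2 * B.mulVec m i := by
    have e1 : ∀ j k : Fin n, B j k * (if j = i then 1 else 0) * m k
        + B j k * m j * (if k = i then 1 else 0)
        = (if j = i then B j k * m k else 0) + (if k = i then B j k * m j else 0) := by
      intro j k; split_ifs <;> ring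
    simp only [e1, Finset.sum_add_distrib]
    have step : ∀ j : Fin n, (∑ k, if j = i then B j k * m k else 0)
        = if j = i then (∑ k, B j k * m k) else 0 := by
      intro j; split_ifs <;> simp
    have t1 : ∑ j, ∑ k, (if j = i then B j k * m k else 0) = ∑ k, B i k * m k := by
      simp only [step]
      simp
    have t2 : ∑ j, ∑ k, (if k = i then B j k * m j else 0) = ∑ j, B j i * m j := by
      refine Finset.sum_congr rfl fun j _ => ?_
      simp
    rw [t1, t2, mulVec_apply']
    have t3 : ∑ j, B j i * m j = ∑ j, B i j * m j :=
      Finset.sum_congr rfl fun j _ => by rw [hB1.apply]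
    rw [t3]; ring
  have hS2 : HasDerivAt (fun x => ∑ j, (Function.update m i x j) ^ 4)
      (∑ j, 4 * m j ^ 3 * (if j = i then 1 else 0)) (m i) := by
    apply HasDerivAt.fun_sum
    intro j _
    have h1 := (update_hasDerivAt m i j).fun_pow 4
    simpa [h0] using h1
  have hsum2 : (∑ j, 4 * m j ^ 3 * (if j = i then 1 else 0)) = 4 * m i ^ 3 := by
    simp [mul_ite]
  have hS3 : HasDerivAt (fun x => ∑ j, (Function.update m i x j) ^ 2)
      (∑ j, 2 * m j ^ 1 * (if j = i then 1 else 0)) (m i) := by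
    apply HasDerivAt.fun_sum
    intro j _
    have h1 := (update_hasDerivAt m i j).fun_pow 2
    simpa [h0] using h1
  have hsum3 : (∑ j, 2 * m j ^ 1 * (if j = i then 1 else 0)) = 2 * m i := by
    simp [mul_ite]
  rw [hsum1] at hS1
  rw [hsum2] at hS2
  rw [hsum3] at hS3
  have hD : HasDerivAt (Efun B β lam ∘ (fun x : ℝ => Function.update m i x))
      ((1/2) * (2 * B.mulVec m i) + (β/4) * (4 * m i ^ 3) - (lam/2) * (2 * m i)) (m i) := by
    have h := ((hS1.const_mul (1/2 : ℝ)).add (hS2.const_mul (β/4))).sub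
      (hS3.const_mul (lam/2))
    exact h
  have hzero := hloc.hasDerivAt_eq_zero hD
  linear_combination hzero

lemma uniq_aux {B : Matrix (Fin n) (Fin n) ℝ} [NeZero n]
    (hoff : ∀ i j, i ≠ j → B i j ≤ 0) {β lam : ℝ} (hβ : 0 < β)
    {u v : Fin n → ℝ} (hu : ∀ i, 0 < u i) (hv : ∀ i, 0 < v i)
    (hue : ∀ i, β * u i ^ 3 + B.mulVec u i = lam * u i)
    (hve : ∀ i, β * v i ^ 3 + B.mulVec v i = lam * v i) :
    ∀ i, v i ≤ u i := by
  haveI : Nonempty (Fin n) := ⟨⟨0, Nat.pos_of_ne_zero (NeZero.ne n)⟩⟩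
  by_contra hcon
  push_neg at hcon
  obtain ⟨i0, hi0⟩ := hcon
  obtain ⟨i, -, hi⟩ := Finset.exists_max_image Finset.univ (fun j => v j / u j)
    Finset.univ_nonempty
  set t := v i / u i with ht
  have htgt : 1 < t := lt_of_lt_of_le ((one_lt_div (hu i0)).2 hi0) (hi i0 (Finset.mem_univ _))
  have hvle : ∀ j, v j ≤ t * u j := fun j => by
    have h1 := hi j (Finset.mem_univ _)
    have hne := (hu j).ne'
    have h2 : v j = (v j / u j) * u j := by field_simp
    rw [h2]
    exact mul_le_mul_of_nonneg_right h1 (le_of_lt (hu j))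
  have hvi : v i = t * u i := by
    have hne := (hu i).ne'
    rw [ht]; field_simp
  have e1 : β * v i ^ 3 + ∑ j, B i j * v j = lam * v i := by
    rw [← mulVec_apply']; exact hve i
  have e2 : β * u i ^ 3 + ∑ j, B i j * u j = lam * u i := by
    rw [← mulVec_apply']; exact hue i
  have key : β * u i ^ 3 * (t ^ 3 - t) + ∑ j, B i j * (v j - t * u j) = 0 := by
    have hsub : ∑ j, B i j * (v j - t * u j)
        = (∑ j, B i j * v j) - t * ∑ j, B i j * u j := by
      rw [Finset.mul_sum, ← Finset.sum_sub_distrib]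
      exact Finset.sum_congr rfl fun j _ => by ring
    rw [hsub]
    linear_combination e1 - t * e2 +
      (lam - β * (v i ^ 2 + v i * (t * u i) + (t * u i) ^ 2)) * hvi
  have hsumnn : 0 ≤ ∑ j, B i j * (v j - t * u j) := by
    apply Finset.sum_nonneg
    intro j _
    rcases eq_or_ne j i with rfl | hj
    · have hz : v j - t * u j = 0 := by rw [hvi]; ring
      rw [hz, mul_zero]
    · have h1 : B i j ≤ 0 := hoff i j (Ne.symm hj)
      have h2 : v j - t * u j ≤ 0 := by linarith [hvle j]
      nlinarith
  have hpos : 0 < β * u i ^ 3 * (t ^ 3 - t) := by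
    have ht1 : 0 < t * ((t - 1) * (t + 1)) :=
      mul_pos (by linarith) (mul_pos (by linarith) (by linarith))
    have h1 : 0 < t ^ 3 - t := by
      calc (0:ℝ) < t * ((t - 1) * (t + 1)) := ht1
        _ = t ^ 3 - t := by ring
    have h2 : 0 < u i ^ 3 := pow_pos (hu i) 3
    positivity
  linarith

lemma exists_eigen {B : Matrix (Fin n) (Fin n) ℝ} [NeZero n] (hB1 : B.IsSymm) {lam : ℝ}
    (hlam : smallestEig B < lam) :
    ∃ (μ : ℝ) (w : Fin n → ℝ), w ≠ 0 ∧ B.mulVec w = μ • w ∧ μ < lam := by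
  classical
  haveI : Nonempty (Fin n) := ⟨⟨0, Nat.pos_of_ne_zero (NeZero.ne n)⟩⟩
  set S : Set ℝ := {μ : ℝ | ∃ v : Fin n → ℝ, v ≠ 0 ∧ B.mulVec v = μ • v} with hS
  have hherm : B.IsHermitian := by
    have h : Bᴴ = Bᵀ := by
      ext i j; simp [Matrix.conjTranspose_apply, Matrix.transpose_apply]
    unfold Matrix.IsHermitian
    rw [h]
    exact hB1
  have hne : S.Nonempty := by
    obtain ⟨j⟩ := (inferInstance : Nonempty (Fin n))
    refine ⟨hherm.eigenvalues j, (WithLp.equiv 2 (Fin n → ℝ)) (hherm.eigenvectorBasis j),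
      ?_, ?_⟩
    · intro h
      apply hherm.eigenvectorBasis.toBasis.ne_zero j
      rw [OrthonormalBasis.coe_toBasis]
      exact (WithLp.equiv 2 (Fin n → ℝ)).injective (by simpa using h)
    · exact hherm.mulVec_eigenvectorBasis j
  have hbdd : BddBelow S := by
    refine ⟨-(∑ i, ∑ j, |B i j|), ?_⟩
    rintro μ ⟨v, hv0, hv⟩
    obtain ⟨i, -, hi⟩ := Finset.exists_max_image Finset.univ (fun j => |v j|)
      Finset.univ_nonempty
    have hvi : 0 < |v i| := by
      obtain ⟨k, hk⟩ := Function.ne_iff.1 hv0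
      have h1 : 0 < |v k| := abs_pos.2 hk
      exact lt_of_lt_of_le h1 (hi k (Finset.mem_univ _))
    have hmv : μ * v i = ∑ j, B i j * v j := by
      have h := congrFun hv i
      rw [mulVec_apply'] at h
      simp only [Pi.smul_apply, smul_eq_mul] at h
      linarith
    have h1 : |μ| * |v i| ≤ (∑ i', ∑ j, |B i' j|) * |v i| := by
      calc |μ| * |v i| = |μ * v i| := (abs_mul μ (v i)).symm
        _ = |∑ j, B i j * v j| := by rw [hmv]
        _ ≤ ∑ j, |B i j * v j| := Finset.abs_sum_le_sum_abs _ _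
        _ ≤ ∑ j, |B i j| * |v i| := by
            refine Finset.sum_le_sum fun j _ => ?_
            rw [abs_mul]
            exact mul_le_mul_of_nonneg_left (hi j (Finset.mem_univ _)) (abs_nonneg _)
        _ = (∑ j, |B i j|) * |v i| := (Finset.sum_mul _ _ _).symm
        _ ≤ (∑ i', ∑ j, |B i' j|) * |v i| := by
            refine mul_le_mul_of_nonneg_right ?_ (abs_nonneg _)
            exact Finset.single_le_sum (f := fun i' => ∑ j, |B i' j|)
              (fun i' _ => Finset.sum_nonneg fun j _ => abs_nonneg _) (Finset.mem_univ i)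
    have h2 : |μ| ≤ ∑ i', ∑ j, |B i' j| := le_of_mul_le_mul_right h1 hvi
    have h3 := neg_abs_le μ
    linarith
  have hlam' : sInf S < lam := hlam
  obtain ⟨μ, hμS, hμ⟩ := (csInf_lt_iff hbdd hne).1 hlam'
  obtain ⟨w, hw0, hw⟩ := hμS
  exact ⟨μ, w, hw0, hw, hμ⟩

lemma Efun_lower {B : Matrix (Fin n) (Fin n) ℝ} {β lam : ℝ} (hβ : 0 < β) [NeZero n]
    (u : Fin n → ℝ) :
    (β/(4*n)) * (∑ i, u i ^ 2)^2 - ((∑ i, ∑ j, |B i j|) + |lam|)/2 * (∑ i, u i ^ 2)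
      ≤ Efun B β lam u := by
  have hn : (0:ℝ) < n := by exact_mod_cast Nat.pos_of_ne_zero (NeZero.ne n)
  set t := ∑ i, u i ^ 2 with htdef
  have ht0 : 0 ≤ t := Finset.sum_nonneg fun i _ => sq_nonneg _
  have hterm : ∀ i, u i ^ 2 ≤ t := fun i => by
    rw [htdef]
    exact Finset.single_le_sum (f := fun j => u j ^ 2) (fun j _ => sq_nonneg _)
      (Finset.mem_univ i)
  have hQ : |∑ i, ∑ j, B i j * u i * u j| ≤ (∑ i, ∑ j, |B i j|) * t := by
    calc |∑ i, ∑ j, B i j * u i * u j| ≤ ∑ i, |∑ j, B i j * u i * u j| :=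
          Finset.abs_sum_le_sum_abs _ _
      _ ≤ ∑ i, ∑ j, |B i j * u i * u j| :=
          Finset.sum_le_sum fun i _ => Finset.abs_sum_le_sum_abs _ _
      _ ≤ ∑ i, ∑ j, |B i j| * t := by
          refine Finset.sum_le_sum fun i _ => Finset.sum_le_sum fun j _ => ?_
          rw [abs_mul, abs_mul]
          have h1 : |u i| * |u j| ≤ t := by
            nlinarith [hterm i, hterm j, sq_abs (u i), sq_abs (u j),
              sq_nonneg (|u i| - |u j|), abs_nonneg (u i), abs_nonneg (u j)]
          calc |B i j| * |u i| * |u j| = |B i j| * (|u i| * |u j|) := by ring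
            _ ≤ |B i j| * t := mul_le_mul_of_nonneg_left h1 (abs_nonneg _)
      _ = (∑ i, ∑ j, |B i j|) * t := by
          rw [Finset.sum_mul]
          exact Finset.sum_congr rfl fun i _ => (Finset.sum_mul _ _ _).symm
  have hS4 : t^2 ≤ n * ∑ i, u i ^ 4 := by
    have h := sq_sum_le_card_mul_sum_sq (s := (Finset.univ : Finset (Fin n)))
      (f := fun i => u i ^ 2)
    simp only [Finset.card_univ, Fintype.card_fin] at h
    have h2 : ∀ i : Fin n, (u i ^ 2) ^ 2 = u i ^ 4 := fun i => by ring
    calc t^2 = (∑ i, u i ^ 2)^2 := by rw [htdef]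
      _ ≤ n * ∑ i, (u i ^ 2)^2 := by exact_mod_cast h
      _ = n * ∑ i, u i ^ 4 := by rw [Finset.sum_congr rfl fun i _ => h2 i]
  have hE : Efun B β lam u = (1/2) * (∑ i, ∑ j, B i j * u i * u j)
      + (β/4) * (∑ i, u i ^ 4) - (lam/2) * t := rfl
  rw [hE]
  have h4 : (β/(4*n)) * t^2 ≤ (β/4) * ∑ i, u i ^ 4 := by
    have hmul : β * t^2 ≤ β * (n * ∑ i, u i ^ 4) :=
      mul_le_mul_of_nonneg_left hS4 hβ.le
    rw [div_mul_eq_mul_div, div_le_iff₀ (by positivity : (0:ℝ) < 4*n)]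
    calc β * t^2 ≤ β * (n * ∑ i, u i ^ 4) := hmul
      _ = (β / 4 * ∑ i, u i ^ 4) * (4 * n) := by ring
  have hQ' : -((∑ i, ∑ j, |B i j|) * t) ≤ ∑ i, ∑ j, B i j * u i * u j :=
    neg_le_of_abs_le hQ
  have hl : lam * t ≤ |lam| * t := mul_le_mul_of_nonneg_right (le_abs_self lam) ht0
  linarith

lemma Efun_abs_le {B : Matrix (Fin n) (Fin n) ℝ} (hoff : ∀ i j, i ≠ j → B i j ≤ 0)
    (β lam : ℝ) (u : Fin n → ℝ) :
    Efun B β lam (fun i => |u i|) ≤ Efun B β lam u := by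
  have h4 : ∀ a : ℝ, |a| ^ 4 = a ^ 4 := fun a => by
    rw [show (4:ℕ) = 2*2 from rfl, pow_mul, pow_mul, sq_abs]
  have h2 : ∀ a : ℝ, |a| ^ 2 = a ^ 2 := sq_abs
  unfold Efun
  simp only [h4, h2]
  have hQle : ∑ i, ∑ j, B i j * |u i| * |u j| ≤ ∑ i, ∑ j, B i j * u i * u j := by
    refine Finset.sum_le_sum fun i _ => Finset.sum_le_sum fun j _ => ?_
    rcases eq_or_ne i j with rfl | hij
    · apply le_of_eq
      rw [mul_assoc, mul_assoc, abs_mul_abs_self]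
    · have h1 : u i * u j ≤ |u i| * |u j| := by rw [← abs_mul]; exact le_abs_self _
      have h3 := mul_le_mul_of_nonpos_left h1 (hoff i j hij)
      calc B i j * |u i| * |u j| = B i j * (|u i| * |u j|) := by rw [mul_assoc]
        _ ≤ B i j * (u i * u j) := h3
        _ = B i j * u i * u j := by rw [mul_assoc]
  linarith

end Aux

set_option maxHeartbeats 1000000 in
theorem stmt3 {n : ℕ} [NeZero n] (B : Matrix (Fin n) (Fin n) ℝ) (β lam : ℝ)
    (hB1 : B.IsSymm) (hB2 : MatIrred B) (hB3 : IsNsMMat B) (hβ : 0 < β)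
    (hlam : smallestEig B < lam) :
    ∃! u : Fin n → ℝ, (∀ i, 0 < u i) ∧ (AU β B u).mulVec u = lam • u := by
  classical
  have hoff := offdiag_nonpos hB3
  obtain ⟨μ, w, hw0, hweig, hμlam⟩ := exists_eigen hB1 hlam
  obtain ⟨k0, hk0⟩ := Function.ne_iff.1 hw0
  set W2 := ∑ i, w i ^ 2 with hW2
  set W4 := ∑ i, w i ^ 4 with hW4
  have hW2pos : 0 < W2 :=
    Finset.sum_pos' (fun i _ => sq_nonneg _)
      ⟨k0, Finset.mem_univ k0, lt_of_le_of_ne (sq_nonneg _) (Ne.symm (pow_ne_zero 2 hk0))⟩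
  have hW4pos : 0 < W4 :=
    Finset.sum_pos' (fun i _ => by positivity)
      ⟨k0, Finset.mem_univ k0,
        lt_of_le_of_ne (by positivity) (Ne.symm (pow_ne_zero 4 hk0))⟩
  have hμlt : 0 < lam - μ := by linarith
  set ε := (lam - μ) * W2 / (β * W4) with hε
  have hεpos : 0 < ε := by positivity
  set c := Real.sqrt (ε/2) with hc
  have hcpos : 0 < c := Real.sqrt_pos.2 (by positivity)
  have hc2 : c ^ 2 = ε/2 := Real.sq_sqrt (by positivity)
  set cw : Fin n → ℝ := fun i => c * w i with hcw
  have hEcw : Efun B β lam cw < 0 := by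
    have h1 : ∀ i, ∑ j, B i j * w j = μ * w i := fun i => by
      have h := congrFun hweig i
      rw [mulVec_apply'] at h
      simpa using h
    have hQ : ∑ i, ∑ j, B i j * cw i * cw j = c^2 * (μ * W2) := by
      calc ∑ i, ∑ j, B i j * cw i * cw j
          = ∑ i, c^2 * (w i * ∑ j, B i j * w j) := by
            refine Finset.sum_congr rfl fun i _ => ?_
            rw [Finset.mul_sum, Finset.mul_sum]
            exact Finset.sum_congr rfl fun j _ => by rw [hcw]; ring
        _ = c^2 * ∑ i, w i * (μ * w i) := by
            rw [← Finset.mul_sum]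
            congr 1
            exact Finset.sum_congr rfl fun i _ => by rw [h1 i]
        _ = c^2 * (μ * W2) := by
            rw [hW2]
            simp only [Finset.mul_sum]
            exact Finset.sum_congr rfl fun i _ => by ring
    have hS4cw : ∑ i, cw i ^ 4 = c^4 * W4 := by
      rw [hW4, Finset.mul_sum]
      exact Finset.sum_congr rfl fun i _ => by rw [hcw]; ring
    have hS2cw : ∑ i, cw i ^ 2 = c^2 * W2 := by
      rw [hW2, Finset.mul_sum]
      exact Finset.sum_congr rfl fun i _ => by rw [hcw]; ring
    have hEeq : Efun B β lam cw = c^2 * ((μ - lam)/2 * W2 + (β/4) * c^2 * W4) := by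
      have : Efun B β lam cw = (1/2) * (∑ i, ∑ j, B i j * cw i * cw j)
          + (β/4) * (∑ i, cw i ^ 4) - (lam/2) * (∑ i, cw i ^ 2) := rfl
      rw [this, hQ, hS4cw, hS2cw]; ring
    rw [hEeq]
    have hval : (μ - lam)/2 * W2 + (β/4) * c^2 * W4 = -(3/8) * ((lam - μ) * W2) := by
      rw [hc2, hε]
      field_simp
      ring
    rw [hval]
    have hneg : -(3/8) * ((lam - μ) * W2) < 0 := by
      have : 0 < (lam - μ) * W2 := mul_pos hμlt hW2pos
      linarith
    have hc2pos : 0 < c^2 := by positivity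
    exact mul_neg_of_pos_of_neg hc2pos hneg
  -- constants for coercivity
  set CB := ∑ i, ∑ j, |B i j| with hCB
  have hCB0 : 0 ≤ CB := Finset.sum_nonneg fun i _ => Finset.sum_nonneg fun j _ => abs_nonneg _
  set Cc := (CB + |lam|)/2 with hCc
  have hCc0 : 0 ≤ Cc := by positivity
  have hn : (0:ℝ) < n := by exact_mod_cast Nat.pos_of_ne_zero (NeZero.ne n)
  set T := 4 * n * Cc / β with hT
  have hT0 : 0 ≤ T := by positivity
  set R := Real.sqrt T + 1 + ‖cw‖ with hR
  have hsq1 : 0 < Real.sqrt T + 1 := by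
    have := Real.sqrt_nonneg T
    linarith
  have hRpos : 0 < R := by
    rw [hR]
    have := norm_nonneg cw
    linarith
  obtain ⟨m, hmmem, hmmin⟩ := (isCompact_closedBall (0 : Fin n → ℝ) R).exists_isMinOn
    ⟨0, Metric.mem_closedBall_self hRpos.le⟩ (Efun_continuous B β lam).continuousOn
  have hcwmem : cw ∈ Metric.closedBall (0 : Fin n → ℝ) R := by
    rw [Metric.mem_closedBall, dist_zero_right, hR]
    linarith [Real.sqrt_nonneg T]
  have hEm_neg : Efun B β lam m < 0 := lt_of_le_of_lt (hmmin hcwmem) hEcw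
  set tm := ∑ i, m i ^ 2 with htm
  have htm0 : 0 ≤ tm := Finset.sum_nonneg fun i _ => sq_nonneg _
  have hlow := Efun_lower (B := B) (lam := lam) hβ m
  rw [← htm, ← hCB] at hlow
  have htmT : tm < T := by
    by_contra hcontra
    push_neg at hcontra
    have h1 : Cc * tm ≤ (β/(4*n)) * tm^2 := by
      have h2 : (β/(4*n)) * T = Cc := by
        rw [hT]; field_simp
      have hb : 0 < β/(4*n) := div_pos hβ (by positivity)
      have h3 : Cc ≤ (β/(4*n)) * tm := by
        rw [← h2]
        exact mul_le_mul_of_nonneg_left hcontra hb.le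
      have h1' : Cc * tm ≤ ((β/(4*n)) * tm) * tm := mul_le_mul_of_nonneg_right h3 htm0
      calc Cc * tm ≤ ((β/(4*n)) * tm) * tm := h1'
        _ = (β/(4*n)) * tm^2 := by ring
    have : (0:ℝ) ≤ (β/(4*n)) * tm^2 - Cc * tm := by linarith
    have hCc' : (CB + |lam|)/2 = Cc := hCc.symm
    rw [hCc'] at hlow
    linarith
  set v : Fin n → ℝ := fun i => |m i| with hv
  have hvE : Efun B β lam v ≤ Efun B β lam m := Efun_abs_le hoff β lam m
  have hnormlt : ∀ i, |m i| < Real.sqrt T + 1 := fun i => by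
    have h1 : m i ^ 2 ≤ tm := by
      rw [htm]
      exact Finset.single_le_sum (f := fun j => m j ^ 2) (fun j _ => sq_nonneg _)
        (Finset.mem_univ i)
    have h2 : m i ^ 2 < T := lt_of_le_of_lt h1 htmT
    have h3 := Real.sqrt_lt_sqrt (sq_nonneg _) h2
    rw [Real.sqrt_sq_eq_abs] at h3
    linarith
  have hvball : v ∈ Metric.ball (0 : Fin n → ℝ) R := by
    rw [Metric.mem_ball, dist_zero_right]
    have h1 : ‖v‖ < Real.sqrt T + 1 := by
      apply (pi_norm_lt_iff hsq1).2
      intro i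
      rw [Real.norm_eq_abs]
      simpa [hv, abs_abs] using hnormlt i
    rw [hR]
    linarith [norm_nonneg cw]
  have hvmem : v ∈ Metric.closedBall (0 : Fin n → ℝ) R := Metric.ball_subset_closedBall hvball
  have hvmin : IsMinOn (Efun B β lam) (Metric.closedBall 0 R) v := by
    apply isMinOn_iff.2
    intro u hu
    exact le_trans hvE (hmmin hu)
  have hloc : IsLocalMin (Efun B β lam) v := hvmin.isLocalMin (by
    exact mem_nhds_iff.2 ⟨Metric.ball 0 R, Metric.ball_subset_closedBall,
      Metric.isOpen_ball, hvball⟩)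
  have hsol : ∀ i, β * v i ^ 3 + B.mulVec v i = lam * v i := fun i => EL hB1 hloc i
  have hvnonneg : ∀ i, 0 ≤ v i := fun i => abs_nonneg _
  have hvne : v ≠ 0 := by
    intro h
    have h0 : Efun B β lam v = 0 := by
      rw [h]; unfold Efun; simp
    linarith
  have hvpos : ∀ i, 0 < v i := by
    by_contra hcontra
    push_neg at hcontra
    obtain ⟨i0, hi0⟩ := hcontra
    set Z : Finset (Fin n) := Finset.univ.filter (fun i => v i = 0) with hZ
    have hi0Z : i0 ∈ Z := by
      simp only [hZ, Finset.mem_filter, Finset.mem_univ, true_and]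
      exact le_antisymm hi0 (hvnonneg i0)
    have hZne : Z.Nonempty := ⟨i0, hi0Z⟩
    have hZproper : Z ≠ Finset.univ := by
      intro h
      apply hvne
      funext k
      have hk : k ∈ Z := h ▸ Finset.mem_univ k
      simpa only [hZ, Finset.mem_filter, Finset.mem_univ, true_and, Pi.zero_apply] using hk
    apply hB2
    refine ⟨Z, hZne, hZproper, ?_⟩
    intro i hiZ j hjZ
    have hvi0 : v i = 0 := by
      simpa only [hZ, Finset.mem_filter, Finset.mem_univ, true_and] using hiZ
    have hvj : 0 < v j := by
      rcases lt_or_eq_of_le (hvnonneg j) with h | h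
      · exact h
      · exfalso
        apply hjZ
        simp only [hZ, Finset.mem_filter, Finset.mem_univ, true_and]
        exact h.symm
    have heq : ∑ k, B i k * v k = 0 := by
      have h := hsol i
      rw [mulVec_apply', hvi0] at h
      simpa using h
    have hterms : ∀ k ∈ Finset.univ, B i k * v k ≤ 0 := fun k _ => by
      rcases eq_or_ne k i with rfl | hk
      · rw [hvi0, mul_zero]
      · rcases eq_or_lt_of_le (hvnonneg k) with h0 | hposk
        · rw [← h0, mul_zero]
        · have := hoff i k (Ne.symm hk)
          nlinarith
    have hjz := (Finset.sum_eq_zero_iff_of_nonpos hterms).1 heq j (Finset.mem_univ j)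
    exact (mul_eq_zero.1 hjz).resolve_right (ne_of_gt hvj)
  refine ⟨v, ⟨hvpos, (eqn_iff β lam B v).2 hsol⟩, ?_⟩
  rintro y ⟨hypos, hyeq⟩
  have hysol := (eqn_iff β lam B y).1 hyeq
  funext i
  exact le_antisymm (uniq_aux hoff hβ hvpos hypos hsol hysol i)
    (uniq_aux hoff hβ hypos hvpos hysol hsol i)
end

section
/- Let B ∈ ℝ^{n×n} be a symmetric irreducible nonsingular M-matrix, β > 0, and let μ = λ_min(B). For λ ∈ (μ, ∞), let u(λ) denote the unique positive solution of β·diag(u^[2])u + Bu = λu. Then the map λ ↦ u(λ) is strictly monotone: if μ < λ₁ < λ₂ then u(λ₁) < u(λ₂) componentwise. -/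
open Matrix Filter Topology

private lemma pointwise_eq {n : ℕ} (β s : ℝ) (A B : Matrix (Fin n) (Fin n) ℝ)
    (hBeq : B = s • (1 : Matrix (Fin n) (Fin n) ℝ) - A)
    (lam : ℝ) (v : Fin n → ℝ) (hv : (AU β B v).mulVec v = lam • v) (i : Fin n) :
    β * v i ^ 3 + s * v i - ∑ j, A i j * v j = lam * v i := by
  have h := congrFun hv i
  simp only [AU, hBeq, Matrix.mulVec, dotProduct, Matrix.add_apply, Matrix.sub_apply,
    Matrix.smul_apply, Matrix.one_apply, Matrix.diagonal_apply, smul_eq_mul, Pi.smul_apply] at h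
  rw [Finset.sum_congr rfl (fun j _ => by split_ifs <;> ring : ∀ j ∈ Finset.univ,
    (β * (if i = j then v i ^ 2 else 0) + (s * (if i = j then 1 else 0) - A i j)) * v j
    = ((if i = j then β * v i ^ 2 * v j + s * v j else 0) - A i j * v j))] at h
  rw [Finset.sum_sub_distrib, Finset.sum_ite_eq Finset.univ i] at h
  simp at h
  linarith [h, (by ring : β * v i ^ 2 * v i = β * v i ^ 3)]

theorem stmt4 {n : ℕ} [NeZero n] (B : Matrix (Fin n) (Fin n) ℝ) (β : ℝ)
    (hB1 : B.IsSymm) (hB2 : MatIrred B) (hB3 : IsNsMMat B) (hβ : 0 < β)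
    (u : ℝ → Fin n → ℝ)
    (hsol : ∀ lam, smallestEig B < lam →
      (∀ i, 0 < u lam i) ∧ (AU β B (u lam)).mulVec (u lam) = lam • u lam)
    (huniq : ∀ lam, smallestEig B < lam → ∀ v : Fin n → ℝ,
      (∀ i, 0 < v i) → (AU β B v).mulVec v = lam • v → v = u lam) :
    ∀ lam₁ lam₂ : ℝ, smallestEig B < lam₁ → lam₁ < lam₂ →
      ∀ i, u lam₁ i < u lam₂ i := by
  intro lam₁ lam₂ h1 h12
  obtain ⟨s, A, hA, _, hBeq⟩ := hB3
  have h2 : smallestEig B < lam₂ := lt_trans h1 h12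
  obtain ⟨hu1pos, hu1eq⟩ := hsol lam₁ h1
  obtain ⟨hu2pos, hu2eq⟩ := hsol lam₂ h2
  set u₁ := u lam₁ with hu₁
  set u₂ := u lam₂ with hu₂
  have e1 : ∀ i, β * u₁ i ^ 3 + s * u₁ i - ∑ j, A i j * u₁ j = lam₁ * u₁ i :=
    pointwise_eq β s A B hBeq lam₁ u₁ hu1eq
  have e2 : ∀ i, β * u₂ i ^ 3 + s * u₂ i - ∑ j, A i j * u₂ j = lam₂ * u₂ i :=
    pointwise_eq β s A B hBeq lam₂ u₂ hu2eq
  obtain ⟨i₀, -, hmax⟩ := Finset.exists_max_image Finset.univ (fun i => u₁ i / u₂ i)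
    (Finset.univ_nonempty)
  set t : ℝ := u₁ i₀ / u₂ i₀ with ht
  have htpos : 0 < t := div_pos (hu1pos i₀) (hu2pos i₀)
  have hle : ∀ j, u₁ j ≤ t * u₂ j := by
    intro j
    have := hmax j (Finset.mem_univ j)
    calc u₁ j = (u₁ j / u₂ j) * u₂ j := (div_mul_cancel₀ _ (ne_of_gt (hu2pos j))).symm
    _ ≤ t * u₂ j := by
        apply mul_le_mul_of_nonneg_right this (le_of_lt (hu2pos j))
  have heq0 : u₁ i₀ = t * u₂ i₀ := (div_mul_cancel₀ _ (ne_of_gt (hu2pos i₀))).symm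
  have hsum : ∑ j, A i₀ j * u₁ j ≤ t * ∑ j, A i₀ j * u₂ j := by
    rw [Finset.mul_sum]
    apply Finset.sum_le_sum
    intro j _
    calc A i₀ j * u₁ j ≤ A i₀ j * (t * u₂ j) :=
          mul_le_mul_of_nonneg_left (hle j) (hA i₀ j)
    _ = t * (A i₀ j * u₂ j) := by ring
  -- derive t < 1
  have ht1 : t < 1 := by
    by_contra hcon
    push_neg at hcon
    have b2 := hu2pos i₀
    have E1 := e1 i₀
    have E2 := e2 i₀
    rw [heq0] at E1
    have E2t : t * (β * u₂ i₀ ^ 3 + s * u₂ i₀ - ∑ j, A i₀ j * u₂ j) = t * (lam₂ * u₂ i₀) := by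
      rw [E2]
    have h1a : (0:ℝ) ≤ t ^ 2 - 1 := by nlinarith
    have h1b : 0 ≤ β * t * u₂ i₀ ^ 3 * (t ^ 2 - 1) :=
      mul_nonneg (mul_nonneg (mul_nonneg hβ.le htpos.le) (by positivity)) h1a
    have h2b : (lam₁ - lam₂) * (t * u₂ i₀) < 0 :=
      mul_neg_of_neg_of_pos (by linarith) (mul_pos htpos b2)
    nlinarith [E1, E2t, hsum, h1b, h2b]
  intro i
  calc u₁ i ≤ t * u₂ i := hle i
  _ < 1 * u₂ i := by apply mul_lt_mul_of_pos_right ht1 (hu2pos i)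
  _ = u₂ i := one_mul _
end

section
/- Let B ∈ ℝ^{n×n} be a symmetric irreducible nonsingular M-matrix, β > 0, μ = λ_min(B), and let u(λ) be the unique positive solution of β·diag(u^[2])u + Bu = λu for λ > μ. Then u(λ) is a continuous (indeed differentiable) function of λ on (μ, ∞), with derivative ∂u(λ)/∂λ = J(u(λ), λ)^{-1} u(λ), where J(u, λ) = 3β·diag(u^[2]) + B − λI. -/
open Matrix Filter Topology

/-! ### Auxiliary lemmas -/

lemma mulVec_JU {n : ℕ} (β lam : ℝ) (B : Matrix (Fin n) (Fin n) ℝ) (u v : Fin n → ℝ) (i : Fin n) :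
    (JU β lam B u).mulVec v i = 3*β*u i^2 * v i + B.mulVec v i - lam * v i := by
  simp [JU, Matrix.sub_mulVec, Matrix.add_mulVec, Matrix.smul_mulVec,
    Matrix.mulVec_diagonal, Matrix.one_mulVec]
  ring

lemma mulVec_AU {n : ℕ} (β : ℝ) (B : Matrix (Fin n) (Fin n) ℝ) (u v : Fin n → ℝ) (i : Fin n) :
    (AU β B u).mulVec v i = β * u i^2 * v i + B.mulVec v i := by
  simp [AU, Matrix.add_mulVec, Matrix.smul_mulVec, Matrix.mulVec_diagonal]
  ring

/-- Key quadratic-form inequality: if a symmetric matrix with nonpositive off-diagonal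
entries has a positive eigenvector `u` with eigenvalue `lam`, then `lam` is its smallest
eigenvalue, i.e. `xᵀ M x ≥ lam ‖x‖²`. -/
lemma quad_ineq {n : ℕ} (M : Matrix (Fin n) (Fin n) ℝ) (hsym : ∀ i j, M i j = M j i)
    (hoff : ∀ i j, i ≠ j → M i j ≤ 0) (u : Fin n → ℝ) (hu : ∀ i, 0 < u i)
    (lam : ℝ) (heig : M.mulVec u = lam • u) (x : Fin n → ℝ) :
    lam * ∑ i, x i ^ 2 ≤ ∑ i, ∑ j, M i j * x i * x j := by
  have hne : ∀ i, u i ≠ 0 := fun i => (hu i).ne'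
  set f : Fin n → Fin n → ℝ := fun i j => M i j * x i * x j - (x i^2 / u i) * (M i j * u j)
    with hf
  have h1 : lam * ∑ i, x i ^ 2 = ∑ i, ∑ j, (x i ^ 2 / u i) * (M i j * u j) := by
    rw [Finset.mul_sum]
    refine Finset.sum_congr rfl fun i _ => ?_
    have hMu : ∑ j, M i j * u j = lam * u i := by
      have := congrFun heig i
      simpa [Matrix.mulVec, dotProduct] using this
    rw [← Finset.mul_sum, hMu,
      show x i ^ 2 / u i * (lam * u i) = lam * x i ^ 2 * (u i / u i) from by ring,
      div_self (hne i), mul_one]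
  have hdiv : ∀ (m : ℝ) (i j : Fin n),
      (x i^2 / u i) * (m * u j) * (u i * u j) = m * x i^2 * u j^2 := by
    intro m i j
    rw [show (x i^2 / u i) * (m * u j) * (u i * u j)
        = (u i / u i) * (m * x i^2 * u j^2) from by ring, div_self (hne i), one_mul]
  have hpair : ∀ i j, (f i j + f j i) * (u i * u j) = (- M i j) * (u j * x i - u i * x j)^2 := by
    intro i j
    have hs := hsym j i
    calc (f i j + f j i) * (u i * u j)
        = (M i j * x i * x j * (u i * u j) - (x i^2 / u i) * (M i j * u j) * (u i * u j))
          + (M i j * x j * x i * (u i * u j) - (x j^2 / u j) * (M i j * u i) * (u j * u i)) := by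
          rw [hf]
          simp only
          rw [hs]
          ring
      _ = (- M i j) * (u j * x i - u i * x j)^2 := by
          rw [hdiv (M i j) i j, hdiv (M i j) j i]
          ring
  have hterm : ∀ i j, 0 ≤ f i j + f j i := by
    intro i j
    have hrhs : 0 ≤ (- M i j) * (u j * x i - u i * x j)^2 := by
      rcases eq_or_ne i j with rfl | hij
      · simp
      · exact mul_nonneg (by linarith [hoff i j hij]) (sq_nonneg _)
    nlinarith [hpair i j, mul_pos (hu i) (hu j)]
  have hD : 0 ≤ ∑ i, ∑ j, f i j := by
    have h2 : ∑ i, ∑ j, (f i j + f j i) = 2 * ∑ i, ∑ j, f i j := by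
      calc ∑ i, ∑ j, (f i j + f j i) = (∑ i, ∑ j, f i j) + ∑ i, ∑ j, f j i := by
            simp [Finset.sum_add_distrib]
        _ = (∑ i, ∑ j, f i j) + ∑ j, ∑ i, f j i := by rw [Finset.sum_comm]
        _ = 2 * ∑ i, ∑ j, f i j := by ring
    have h3 : 0 ≤ ∑ i, ∑ j, (f i j + f j i) :=
      Finset.sum_nonneg fun i _ => Finset.sum_nonneg fun j _ => hterm i j
    linarith
  have h4 : ∑ i, ∑ j, M i j * x i * x j - lam * ∑ i, x i ^ 2 = ∑ i, ∑ j, f i j := by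
    rw [h1, ← Finset.sum_sub_distrib]
    refine Finset.sum_congr rfl fun i _ => ?_
    rw [← Finset.sum_sub_distrib]
  linarith

/-- The Jacobian `J(u,λ)` is nonsingular at a positive solution. -/
lemma J_isUnit {n : ℕ} (B : Matrix (Fin n) (Fin n) ℝ) (β : ℝ) (hB1 : B.IsSymm)
    (hB3 : IsNsMMat B) (hβ : 0 < β) (u : Fin n → ℝ) (hu : ∀ i, 0 < u i) (lam : ℝ)
    (heq : (AU β B u).mulVec u = lam • u) : IsUnit (JU β lam B u).det := by
  rw [isUnit_iff_ne_zero]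
  intro hdet
  obtain ⟨x, hx0, hx⟩ := Matrix.exists_mulVec_eq_zero_iff.mpr hdet
  have hsym : ∀ i j, (AU β B u) i j = (AU β B u) j i := by
    intro i j
    rcases eq_or_ne i j with rfl | hij
    · rfl
    · simp [AU, Matrix.add_apply, Matrix.diagonal_apply_ne _ hij,
        Matrix.diagonal_apply_ne _ (Ne.symm hij), hB1.apply j i]
  have hoff : ∀ i j, i ≠ j → (AU β B u) i j ≤ 0 := by
    intro i j hij
    obtain ⟨s, A, hA, _, hBeq⟩ := hB3
    have hBij : B i j = - A i j := by
      rw [hBeq]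
      simp [Matrix.sub_apply, Matrix.one_apply_ne hij]
    simp only [AU, Matrix.add_apply, Matrix.smul_apply, Matrix.diagonal_apply_ne _ hij,
      smul_eq_mul, mul_zero, zero_add, hBij]
    linarith [hA i j]
  have hkey := quad_ineq (AU β B u) hsym hoff u hu lam heq x
  have hrow : ∀ i, ∑ j, (AU β B u) i j * x i * x j = x i * ((AU β B u).mulVec x i) := by
    intro i
    have hmv : (AU β B u).mulVec x i = ∑ j, (AU β B u) i j * x j := by
      simp [Matrix.mulVec, dotProduct]
    rw [hmv, Finset.mul_sum]
    exact Finset.sum_congr rfl fun j _ => by ring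
  have hsum1 : ∑ i, ∑ j, (AU β B u) i j * x i * x j
      = β * (∑ i, u i^2 * x i^2) + ∑ i, x i * B.mulVec x i := by
    rw [Finset.mul_sum, ← Finset.sum_add_distrib]
    refine Finset.sum_congr rfl fun i _ => ?_
    rw [hrow i, mulVec_AU]
    ring
  have hsum2 : (0:ℝ) = 3*β*(∑ i, u i^2 * x i^2) + (∑ i, x i * B.mulVec x i)
      - lam * ∑ i, x i^2 := by
    have h0 : ∑ i, x i * ((JU β lam B u).mulVec x i) = 0 := by
      simp [hx]
    calc (0:ℝ) = ∑ i, x i * ((JU β lam B u).mulVec x i) := h0.symm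
      _ = ∑ i, (3*β*(u i^2 * x i^2) + x i * B.mulVec x i - lam * x i^2) := by
          refine Finset.sum_congr rfl fun i _ => ?_
          rw [mulVec_JU]
          ring
      _ = 3*β*(∑ i, u i^2 * x i^2) + (∑ i, x i * B.mulVec x i) - lam * ∑ i, x i^2 := by
          rw [Finset.sum_sub_distrib, Finset.sum_add_distrib, ← Finset.mul_sum, ← Finset.mul_sum]
  have hS2pos : 0 < ∑ i, u i^2 * x i^2 := by
    obtain ⟨i, hi⟩ : ∃ i, x i ≠ 0 := by
      by_contra h
      push_neg at h
      exact hx0 (funext h)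
    refine Finset.sum_pos' (fun j _ => by positivity) ⟨i, Finset.mem_univ i, ?_⟩
    exact mul_pos (pow_pos (hu i) 2) (pow_two_pos_of_ne_zero hi)
  linarith [mul_pos hβ hS2pos]

theorem stmt5 {n : ℕ} [NeZero n] (B : Matrix (Fin n) (Fin n) ℝ) (β : ℝ)
    (hB1 : B.IsSymm) (hB2 : MatIrred B) (hB3 : IsNsMMat B) (hβ : 0 < β)
    (u : ℝ → Fin n → ℝ)
    (hsol : ∀ lam, smallestEig B < lam →
      (∀ i, 0 < u lam i) ∧ (AU β B (u lam)).mulVec (u lam) = lam • u lam)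
    (huniq : ∀ lam, smallestEig B < lam → ∀ v : Fin n → ℝ,
      (∀ i, 0 < v i) → (AU β B v).mulVec v = lam • v → v = u lam) :
    ContinuousOn u (Set.Ioi (smallestEig B)) ∧
    ∀ lam, smallestEig B < lam →
      HasDerivAt u ((JU β lam B (u lam))⁻¹.mulVec (u lam)) lam := by
  have key : ∀ lam, smallestEig B < lam →
      HasDerivAt u ((JU β lam B (u lam))⁻¹.mulVec (u lam)) lam := by
    intro lam0 hlam0
    obtain ⟨hupos, hueq⟩ := hsol lam0 hlam0
    set u₀ := u lam0 with hu₀def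
    set J := JU β lam0 B u₀ with hJdef
    have hJ : IsUnit J.det := J_isUnit B β hB1 hB3 hβ u₀ hupos lam0 hueq
    -- the continuous linear equivalence p ↦ (J p.1 - p.2 • u₀, p.2)
    let Φlin : ((Fin n → ℝ) × ℝ) ≃ₗ[ℝ] ((Fin n → ℝ) × ℝ) :=
      { toFun := fun p => (J.mulVec p.1 - p.2 • u₀, p.2)
        invFun := fun q => (J⁻¹.mulVec (q.1 + q.2 • u₀), q.2)
        map_add' := by
          intro p q
          refine Prod.ext ?_ rfl
          simp [Matrix.mulVec_add, add_smul]
          abel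
        map_smul' := by
          intro c p
          refine Prod.ext ?_ rfl
          simp [Matrix.mulVec_smul, smul_sub, smul_smul]
        left_inv := by
          intro p
          refine Prod.ext ?_ rfl
          simp [Matrix.mulVec_mulVec, Matrix.nonsing_inv_mul _ hJ, Matrix.one_mulVec]
        right_inv := by
          intro q
          refine Prod.ext ?_ rfl
          simp [Matrix.mulVec_mulVec, Matrix.mul_nonsing_inv _ hJ, Matrix.one_mulVec] }
    let Φ : ((Fin n → ℝ) × ℝ) ≃L[ℝ] ((Fin n → ℝ) × ℝ) := Φlin.toContinuousLinearEquiv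
    have hΦapp : ∀ p : (Fin n → ℝ) × ℝ,
        (Φ : ((Fin n → ℝ) × ℝ) →L[ℝ] ((Fin n → ℝ) × ℝ)) p
          = (J.mulVec p.1 - p.2 • u₀, p.2) := fun p => rfl
    -- strict derivative of G p = (F p, p.2)
    have hs : HasStrictFDerivAt (fun p : (Fin n → ℝ) × ℝ => p.2)
        (ContinuousLinearMap.snd ℝ (Fin n → ℝ) ℝ) (u₀, lam0) :=
      (ContinuousLinearMap.snd ℝ (Fin n → ℝ) ℝ).hasStrictFDerivAt
    have he : ∀ j : Fin n, HasStrictFDerivAt (fun p : (Fin n → ℝ) × ℝ => p.1 j)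
        ((ContinuousLinearMap.proj j).comp (ContinuousLinearMap.fst ℝ (Fin n → ℝ) ℝ))
        (u₀, lam0) := fun j =>
      ((ContinuousLinearMap.proj j).comp
        (ContinuousLinearMap.fst ℝ (Fin n → ℝ) ℝ)).hasStrictFDerivAt
    have hF : HasStrictFDerivAt
        (fun p : (Fin n → ℝ) × ℝ =>
          (fun i => β * (p.1 i * p.1 i * p.1 i) + B.mulVec p.1 i - p.2 * p.1 i : Fin n → ℝ))
        ((ContinuousLinearMap.fst ℝ (Fin n → ℝ) ℝ).comp
          (Φ : ((Fin n → ℝ) × ℝ) →L[ℝ] ((Fin n → ℝ) × ℝ))) (u₀, lam0) := by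
      apply hasStrictFDerivAt_pi''
      intro i
      have hBlin : HasStrictFDerivAt (fun p : (Fin n → ℝ) × ℝ => B.mulVec p.1 i)
          (∑ j, B i j • ((ContinuousLinearMap.proj j).comp
            (ContinuousLinearMap.fst ℝ (Fin n → ℝ) ℝ))) (u₀, lam0) := by
        have hrew : (fun p : (Fin n → ℝ) × ℝ => B.mulVec p.1 i)
            = fun p : (Fin n → ℝ) × ℝ => ∑ j, B i j * p.1 j := by
          funext p
          simp [Matrix.mulVec, dotProduct]
        rw [hrew]
        exact HasStrictFDerivAt.fun_sum fun j _ => (he j).const_mul (B i j)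
      have hcube := (((he i).mul (he i)).mul (he i)).const_mul β
      have hmul := hs.mul (he i)
      have hall := (hcube.add hBlin).sub hmul
      refine hall.congr_fderiv ?_
      refine ContinuousLinearMap.ext fun p => ?_
      have hrhs : ((ContinuousLinearMap.proj i).comp
          ((ContinuousLinearMap.fst ℝ (Fin n → ℝ) ℝ).comp
            (Φ : ((Fin n → ℝ) × ℝ) →L[ℝ] ((Fin n → ℝ) × ℝ)))) p
          = 3*β*u₀ i^2 * p.1 i + (∑ j, B i j * p.1 j) - lam0 * p.1 i - p.2 * u₀ i := by
        have h1 : ((ContinuousLinearMap.proj i).comp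
            ((ContinuousLinearMap.fst ℝ (Fin n → ℝ) ℝ).comp
              (Φ : ((Fin n → ℝ) × ℝ) →L[ℝ] ((Fin n → ℝ) × ℝ)))) p
            = J.mulVec p.1 i - p.2 * u₀ i := rfl
        rw [h1, hJdef, mulVec_JU]
        try simp [Matrix.mulVec, dotProduct]
        try ring
      rw [hrhs]
      simp [ContinuousLinearMap.add_apply, ContinuousLinearMap.sub_apply,
        ContinuousLinearMap.smul_apply, ContinuousLinearMap.sum_apply,
        ContinuousLinearMap.comp_apply, ContinuousLinearMap.proj_apply,
        ContinuousLinearMap.coe_fst', ContinuousLinearMap.coe_snd', smul_eq_mul]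
      ring
    have hG : HasStrictFDerivAt
        (fun p : (Fin n → ℝ) × ℝ =>
          ((fun i => β * (p.1 i * p.1 i * p.1 i) + B.mulVec p.1 i - p.2 * p.1 i : Fin n → ℝ),
            p.2))
        (Φ : ((Fin n → ℝ) × ℝ) →L[ℝ] ((Fin n → ℝ) × ℝ)) (u₀, lam0) := by
      refine (HasStrictFDerivAt.prodMk hF hs).congr_fderiv ?_
      refine ContinuousLinearMap.ext fun p => ?_
      rfl
    -- value of G at the base point
    have hG0 : ((fun i => β * (u₀ i * u₀ i * u₀ i) + B.mulVec u₀ i - lam0 * u₀ i : Fin n → ℝ),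
        lam0) = ((0 : Fin n → ℝ), lam0) := by
      refine Prod.ext ?_ rfl
      funext i
      have h := congrFun hueq i
      rw [mulVec_AU] at h
      simp only [Pi.smul_apply, smul_eq_mul] at h
      simp only [Pi.zero_apply]
      nlinarith [h]
    -- local inverse
    set w : ℝ → (Fin n → ℝ) × ℝ := fun t => hG.localInverse _ _ _ ((0 : Fin n → ℝ), t)
      with hwdef
    have hloc : HasStrictFDerivAt (hG.localInverse _ _ _)
        ((Φ.symm : ((Fin n → ℝ) × ℝ) →L[ℝ] ((Fin n → ℝ) × ℝ))) ((0 : Fin n → ℝ), lam0) := by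
      have := hG.to_localInverse
      rwa [hG0] at this
    have hinner : HasDerivAt (fun t : ℝ => ((0 : Fin n → ℝ), t))
        (((0 : Fin n → ℝ), (1 : ℝ))) lam0 :=
      HasDerivAt.prodMk (hasDerivAt_const lam0 (0 : Fin n → ℝ)) (hasDerivAt_id lam0)
    have hsymmval : Φ.symm ((0 : Fin n → ℝ), (1 : ℝ)) = (J⁻¹.mulVec u₀, 1) := by
      rw [ContinuousLinearEquiv.symm_apply_eq]
      have : Φ (J⁻¹.mulVec u₀, (1:ℝ))
          = (J.mulVec (J⁻¹.mulVec u₀) - (1:ℝ) • u₀, (1:ℝ)) := rfl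
      rw [this]
      refine Prod.ext ?_ rfl
      simp [Matrix.mulVec_mulVec, Matrix.mul_nonsing_inv _ hJ, Matrix.one_mulVec]
    have hw : HasDerivAt w (J⁻¹.mulVec u₀, (1:ℝ)) lam0 := by
      have := hloc.hasFDerivAt.comp_hasDerivAt lam0 hinner
      rw [ContinuousLinearEquiv.coe_coe] at this
      rwa [hsymmval] at this
    set g : ℝ → Fin n → ℝ := fun t => (w t).1 with hgdef
    have hg : HasDerivAt g (J⁻¹.mulVec u₀) lam0 := by
      have := (ContinuousLinearMap.fst ℝ (Fin n → ℝ) ℝ).hasFDerivAt.comp_hasDerivAt lam0 hw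
      exact this
    -- w lam0 = (u₀, lam0)
    have hw0 : w lam0 = (u₀, lam0) := by
      have := hG.localInverse_apply_image
      rw [hG0] at this
      exact this
    -- eventually G (w t) = (0, t)
    have htend : Tendsto (fun t : ℝ => ((0 : Fin n → ℝ), t)) (𝓝 lam0)
        (𝓝 ((0 : Fin n → ℝ), lam0)) :=
      (Continuous.prodMk continuous_const continuous_id).tendsto lam0
    have hev1 : ∀ᶠ t in 𝓝 lam0,
        ((fun i => β * ((w t).1 i * (w t).1 i * (w t).1 i) + B.mulVec (w t).1 i
          - (w t).2 * (w t).1 i : Fin n → ℝ), (w t).2) = ((0 : Fin n → ℝ), t) := by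
      have h := hG.eventually_right_inverse
      rw [hG0] at h
      exact htend.eventually h
    -- eventually g is a positive solution
    have heqn : ∀ᶠ t in 𝓝 lam0, (AU β B (g t)).mulVec (g t) = t • (g t) := by
      refine hev1.mono fun t ht => ?_
      have h2 : (w t).2 = t := congrArg Prod.snd ht
      have h1 := congrArg Prod.fst ht
      funext i
      have h3 := congrFun h1 i
      simp only [Pi.zero_apply] at h3
      rw [mulVec_AU]
      simp only [Pi.smul_apply, smul_eq_mul]
      rw [h2] at h3
      have : g t = (w t).1 := rfl
      rw [this]
      nlinarith [h3]
    have hpos : ∀ᶠ t in 𝓝 lam0, ∀ i, 0 < g t i := by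
      rw [eventually_all]
      intro i
      have hc : ContinuousAt (fun t => g t i) lam0 :=
        (continuous_apply i).continuousAt.comp hg.continuousAt
      have hgl : g lam0 i = u₀ i := by rw [hgdef]; simp [hw0]
      have : Tendsto (fun t => g t i) (𝓝 lam0) (𝓝 (u₀ i)) := by
        rw [← hgl]; exact hc
      exact this.eventually_const_lt (hupos i)
    have hgt : ∀ᶠ t in 𝓝 lam0, smallestEig B < t := eventually_gt_nhds hlam0
    have hfinal : ∀ᶠ t in 𝓝 lam0, u t = g t := by
      filter_upwards [heqn, hpos, hgt] with t h1 h2 h3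
      exact (huniq t h3 (g t) h2 h1).symm
    exact hg.congr_of_eventuallyEq hfinal
  exact ⟨fun lam hlam => ((key lam hlam).continuousAt).continuousWithinAt, key⟩
end

section
/- Under the hypotheses of the Newton iteration for the unconstrained problem (B symmetric irreducible nonsingular M-matrix, β > 0, λ > λ_min(B), initial point u₀ = αp satisfying u₀ > u and min_i β(αp_i)² > λ − λ_min(B)), each Jacobian 3β·diag(u_k^[2]) + B − λI encountered along the iteration is a nonsingular M-matrix, so each Newton step is well-defined. -/
open Matrix Filter Topology

lemma quadform_mulVec {n : ℕ} (M : Matrix (Fin n) (Fin n) ℝ) (x : Fin n → ℝ) :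
    ∑ i, ∑ j, x i * M i j * x j = ∑ i, x i * (M.mulVec x) i := by
  simp [Matrix.mulVec, dotProduct, Finset.mul_sum, mul_assoc]

lemma quad_lb {n : ℕ} (M : Matrix (Fin n) (Fin n) ℝ)
    (hsym : ∀ i j, M i j = M j i) (hoff : ∀ i j, i ≠ j → M i j ≤ 0)
    (w : Fin n → ℝ) (hw : ∀ i, 0 < w i) (μ : ℝ)
    (heig : ∀ i, ∑ j, M i j * w j = μ * w i) (x : Fin n → ℝ) :
    μ * ∑ i, x i ^ 2 ≤ ∑ i, ∑ j, x i * M i j * x j := by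
  set y : Fin n → ℝ := fun i => x i / w i with hy
  have hx : ∀ i, x i = y i * w i := fun i => (div_mul_cancel₀ (x i) (hw i).ne').symm
  have hS : 0 ≤ ∑ i, ∑ j, (-(M i j)) * (w i * w j) * (y i - y j) ^ 2 := by
    refine Finset.sum_nonneg fun i _ => Finset.sum_nonneg fun j _ => ?_
    rcases eq_or_ne i j with rfl | hij
    · simp
    · exact mul_nonneg (mul_nonneg (by linarith [hoff i j hij])
        (mul_nonneg (hw i).le (hw j).le)) (sq_nonneg _)
  have key : ∀ i j, (-(M i j)) * (w i * w j) * (y i - y j) ^ 2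
      = 2 * (x i * M i j * x j) - (w i * y i ^ 2) * (M i j * w j)
        - (w j * y j ^ 2) * (M i j * w i) := by
    intro i j; rw [hx i, hx j]; ring
  have h1 : ∑ i, ∑ j, (w i * y i ^ 2) * (M i j * w j) = μ * ∑ i, x i ^ 2 := by
    calc ∑ i, ∑ j, (w i * y i ^ 2) * (M i j * w j)
        = ∑ i, (w i * y i ^ 2) * ∑ j, M i j * w j := by
          simp [Finset.mul_sum]
      _ = ∑ i, (w i * y i ^ 2) * (μ * w i) :=
          Finset.sum_congr rfl fun i _ => by rw [heig i]
      _ = μ * ∑ i, x i ^ 2 := by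
          rw [Finset.mul_sum]
          exact Finset.sum_congr rfl fun i _ => by rw [hx i]; ring
  have h2 : ∑ i, ∑ j, (w j * y j ^ 2) * (M i j * w i) = μ * ∑ i, x i ^ 2 := by
    rw [Finset.sum_comm]
    calc ∑ j, ∑ i, (w j * y j ^ 2) * (M i j * w i)
        = ∑ j, (w j * y j ^ 2) * ∑ i, M j i * w i := by
          refine Finset.sum_congr rfl fun j _ => ?_
          rw [Finset.mul_sum]
          exact Finset.sum_congr rfl fun i _ => by rw [hsym i j]
      _ = ∑ j, (w j * y j ^ 2) * (μ * w j) :=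
          Finset.sum_congr rfl fun j _ => by rw [heig j]
      _ = μ * ∑ i, x i ^ 2 := by
          rw [Finset.mul_sum]
          exact Finset.sum_congr rfl fun j _ => by rw [hx j]; ring
  have hsum : ∑ i, ∑ j, (-(M i j)) * (w i * w j) * (y i - y j) ^ 2
      = 2 * (∑ i, ∑ j, x i * M i j * x j) - μ * ∑ i, x i ^ 2 - μ * ∑ i, x i ^ 2 := by
    calc ∑ i, ∑ j, (-(M i j)) * (w i * w j) * (y i - y j) ^ 2
        = ∑ i, ∑ j, (2 * (x i * M i j * x j) - (w i * y i ^ 2) * (M i j * w j)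
            - (w j * y j ^ 2) * (M i j * w i)) :=
          Finset.sum_congr rfl fun i _ => Finset.sum_congr rfl fun j _ => key i j
      _ = 2 * (∑ i, ∑ j, x i * M i j * x j)
            - ∑ i, ∑ j, (w i * y i ^ 2) * (M i j * w j)
            - ∑ i, ∑ j, (w j * y j ^ 2) * (M i j * w i) := by
          simp only [Finset.sum_sub_distrib, Finset.mul_sum]
      _ = _ := by rw [h1, h2]
  linarith [hsum ▸ hS]

lemma nsmmat_of_coercive {n : ℕ} (J : Matrix (Fin n) (Fin n) ℝ)
    (hsym : ∀ i j, J i j = J j i) (hoff : ∀ i j, i ≠ j → J i j ≤ 0)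
    (δ : ℝ) (hδ0 : 0 < δ) (hδ1 : δ ≤ 1)
    (hco : ∀ x : Fin n → ℝ, δ * ∑ i, x i ^ 2 ≤ ∑ i, ∑ j, x i * J i j * x j) :
    IsNsMMat J := by
  set C : ℝ := ∑ i, ∑ j, |J i j| with hC
  have hC0 : 0 ≤ C := Finset.sum_nonneg fun i _ => Finset.sum_nonneg fun j _ => abs_nonneg _
  set s : ℝ := C + 1 with hs
  set A : Matrix (Fin n) (Fin n) ℝ := s • (1 : Matrix (Fin n) (Fin n) ℝ) - J with hA
  have habs : ∀ i j, |J i j| ≤ C := by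
    intro i j
    calc |J i j| ≤ ∑ j', |J i j'| := Finset.single_le_sum (f := fun j' => |J i j'|)
          (fun j' _ => abs_nonneg _) (Finset.mem_univ j)
      _ ≤ C := Finset.single_le_sum (f := fun i' => ∑ j', |J i' j'|)
          (fun i' _ => Finset.sum_nonneg fun j' _ => abs_nonneg _)
          (Finset.mem_univ i)
  refine ⟨s, A, ?_, ?_, (sub_sub_cancel _ _).symm⟩
  · intro i j
    rcases eq_or_ne i j with rfl | hij
    · have := (le_abs_self (J i i)).trans (habs i i)
      simp only [hA, Matrix.sub_apply, Matrix.smul_apply, Matrix.one_apply_eq, smul_eq_mul,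
        mul_one]
      linarith
    · have := hoff i j hij
      simp only [hA, Matrix.sub_apply, Matrix.smul_apply, Matrix.one_apply_ne hij, smul_eq_mul,
        mul_zero]
      linarith
  · have hkey : ∀ μ : ℂ, μ ∈ spectrum ℂ (A.map (fun x => (x : ℂ))) → ‖μ‖ ≤ s - δ := by
      intro μ hμ
      -- determinant over ℂ vanishes
      rw [spectrum.mem_iff, Algebra.algebraMap_eq_smul_one, Matrix.isUnit_iff_isUnit_det,
        isUnit_iff_ne_zero, not_ne_iff] at hμ
      -- complex eigenvector
      obtain ⟨z, hz0, hz⟩ := (Matrix.exists_mulVec_eq_zero_iff).2 hμ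
      have hzeig : (A.map (fun x => (x : ℂ))).mulVec z = μ • z := by
        have := hz
        rw [Matrix.sub_mulVec, Matrix.smul_mulVec, Matrix.one_mulVec, sub_eq_zero] at this
        exact this.symm
      -- A is symmetric
      have hAsym : ∀ i j, A i j = A j i := by
        intro i j
        rcases eq_or_ne i j with rfl | hij
        · rfl
        · simp only [hA, Matrix.sub_apply, Matrix.smul_apply, Matrix.one_apply_ne hij,
            Matrix.one_apply_ne (Ne.symm hij), smul_eq_mul, mul_zero]
          rw [hsym i j]
      set N := A.map (fun x : ℝ => (x : ℂ)) with hN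
      -- μ is real
      have hT0 : (0:ℝ) < ∑ i, Complex.normSq (z i) := by
        have hex : ∃ i, z i ≠ 0 := by
          by_contra h; push_neg at h; exact hz0 (funext h)
        obtain ⟨i0, hi0⟩ := hex
        exact Finset.sum_pos' (fun i _ => Complex.normSq_nonneg _)
          ⟨i0, Finset.mem_univ i0, Complex.normSq_pos.2 hi0⟩
      set c : ℂ := ∑ i, (starRingEnd ℂ) (z i) * ((N.mulVec z) i) with hcdef
      have hc1 : c = μ * ((∑ i, Complex.normSq (z i) : ℝ) : ℂ) := by
        rw [hcdef, hzeig]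
        push_cast
        rw [Finset.mul_sum]
        refine Finset.sum_congr rfl fun i _ => ?_
        rw [Pi.smul_apply, smul_eq_mul]
        rw [show (starRingEnd ℂ) (z i) * (μ * z i) = μ * (z i * (starRingEnd ℂ) (z i)) by ring,
          Complex.mul_conj]
      have hc2 : (starRingEnd ℂ) c = c := by
        rw [hcdef]
        rw [map_sum]
        have expand : ∀ (u : Fin n → ℂ), ∑ i, (starRingEnd ℂ) (u i) * ((N.mulVec u) i)
            = ∑ i, ∑ j, (starRingEnd ℂ) (u i) * (N i j * u j) := by
          intro u
          refine Finset.sum_congr rfl fun i _ => ?_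
          rw [Matrix.mulVec, dotProduct, Finset.mul_sum]
        calc ∑ i, (starRingEnd ℂ) ((starRingEnd ℂ) (z i) * ((N.mulVec z) i))
            = ∑ i, ∑ j, z i * ((starRingEnd ℂ) (N i j) * (starRingEnd ℂ) (z j)) := by
              refine Finset.sum_congr rfl fun i _ => ?_
              rw [show ((N.mulVec z) i) = ∑ j, N i j * z j from by
                rw [Matrix.mulVec, dotProduct]]
              rw [_root_.map_mul, map_sum, Finset.mul_sum]
              refine Finset.sum_congr rfl fun j _ => ?_
              rw [_root_.map_mul, Complex.conj_conj]
          _ = ∑ i, ∑ j, (starRingEnd ℂ) (z j) * (N j i * z i) := by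
              refine Finset.sum_congr rfl fun i _ => Finset.sum_congr rfl fun j _ => ?_
              have hreal : (starRingEnd ℂ) (N i j) = N i j := by
                rw [hN, Matrix.map_apply, Complex.conj_ofReal]
              have hNsym : N i j = N j i := by
                rw [hN, Matrix.map_apply, Matrix.map_apply, hAsym i j]
              rw [hreal, hNsym]; ring
          _ = ∑ i, (starRingEnd ℂ) (z i) * ((N.mulVec z) i) := by
              rw [Finset.sum_comm, expand z]
      have hμreal : ((μ.re : ℝ) : ℂ) = μ := by
        have hTne : ((∑ i, Complex.normSq (z i) : ℝ) : ℂ) ≠ 0 := by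
          exact_mod_cast hT0.ne'
        have : (starRingEnd ℂ) μ = μ := by
          have := hc2
          rw [hc1, _root_.map_mul, Complex.conj_ofReal] at this
          exact mul_right_cancel₀ hTne this
        exact Complex.conj_eq_iff_re.mp this
      set t : ℝ := μ.re with ht
      -- real determinant vanishes
      have hmap : ((t • (1 : Matrix (Fin n) (Fin n) ℝ) - A).map (fun x : ℝ => (x : ℂ)))
          = μ • (1 : Matrix (Fin n) (Fin n) ℂ) - N := by
        ext i j
        rcases eq_or_ne i j with rfl | hij
        · simp only [Matrix.map_apply, Matrix.sub_apply, Matrix.smul_apply, Matrix.one_apply_eq,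
            smul_eq_mul, mul_one, hN]
          push_cast
          rw [hμreal]
        · simp only [Matrix.map_apply, Matrix.sub_apply, Matrix.smul_apply,
            Matrix.one_apply_ne hij, smul_eq_mul, mul_zero, hN]
          push_cast
          ring
      have hdetR : (t • (1 : Matrix (Fin n) (Fin n) ℝ) - A).det = 0 := by
        have hmd := RingHom.map_det (algebraMap ℝ ℂ) (t • (1 : Matrix (Fin n) (Fin n) ℝ) - A)
        rw [RingHom.mapMatrix_apply] at hmd
        have halg : (t • (1 : Matrix (Fin n) (Fin n) ℝ) - A).map (algebraMap ℝ ℂ)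
            = (t • (1 : Matrix (Fin n) (Fin n) ℝ) - A).map (fun x : ℝ => (x : ℂ)) := rfl
        rw [halg, hmap] at hmd
        have : (algebraMap ℝ ℂ) (t • (1 : Matrix (Fin n) (Fin n) ℝ) - A).det = 0 := by
          rw [hmd, hμ]
        rwa [show (algebraMap ℝ ℂ) (t • (1 : Matrix (Fin n) (Fin n) ℝ) - A).det
          = (((t • (1 : Matrix (Fin n) (Fin n) ℝ) - A).det : ℝ) : ℂ) from rfl,
          Complex.ofReal_eq_zero] at this
      -- real eigenvector
      obtain ⟨v, hv0, hv⟩ := (Matrix.exists_mulVec_eq_zero_iff).2 hdetR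
      have hveig : A.mulVec v = t • v := by
        rw [Matrix.sub_mulVec, Matrix.smul_mulVec, Matrix.one_mulVec, sub_eq_zero] at hv
        exact hv.symm
      have hJeig : J.mulVec v = (s - t) • v := by
        have hJA : J = s • (1 : Matrix (Fin n) (Fin n) ℝ) - A := (sub_sub_cancel _ _).symm
        rw [hJA, Matrix.sub_mulVec, Matrix.smul_mulVec, Matrix.one_mulVec, hveig,
          sub_smul]
      set q : ℝ := ∑ i, v i ^ 2 with hq
      have hq0 : 0 < q := by
        have hex : ∃ i, v i ≠ 0 := by
          by_contra h; push_neg at h; exact hv0 (funext h)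
        obtain ⟨i0, hi0⟩ := hex
        exact Finset.sum_pos' (fun i _ => sq_nonneg _)
          ⟨i0, Finset.mem_univ i0, by positivity⟩
      have hQ : ∑ i, ∑ j, v i * J i j * v j = (s - t) * q := by
        rw [quadform_mulVec, hJeig, hq, Finset.mul_sum]
        refine Finset.sum_congr rfl fun i _ => ?_
        rw [Pi.smul_apply, smul_eq_mul]; ring
      -- upper bound on t
      have ht_ub : t ≤ s - δ := by
        have h := hco v
        rw [hQ] at h
        have : δ ≤ s - t := le_of_mul_le_mul_right (by linarith [h]) hq0
        linarith
      -- upper bound on quadratic form, giving lower bound on t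
      have hQub : (s - t) * q ≤ C * q := by
        rw [← hQ]
        calc ∑ i, ∑ j, v i * J i j * v j ≤ ∑ i, ∑ j, |J i j| * q := by
              refine Finset.sum_le_sum fun i _ => Finset.sum_le_sum fun j _ => ?_
              have hvi : v i ^ 2 ≤ q := Finset.single_le_sum (f := fun i' => v i' ^ 2)
                (fun i' _ => sq_nonneg _) (Finset.mem_univ i)
              have hvj : v j ^ 2 ≤ q := Finset.single_le_sum (f := fun i' => v i' ^ 2)
                (fun i' _ => sq_nonneg _) (Finset.mem_univ j)
              have h1 : v i * J i j * v j ≤ |J i j| * |v i * v j| := by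
                calc v i * J i j * v j ≤ |v i * J i j * v j| := le_abs_self _
                  _ = |J i j| * |v i * v j| := by rw [abs_mul, abs_mul, abs_mul]; ring
              have h2 : |v i * v j| ≤ q := by
                rw [abs_mul]
                nlinarith [sq_nonneg (|v i| - |v j|), sq_abs (v i), sq_abs (v j),
                  abs_nonneg (v i), abs_nonneg (v j)]
              calc v i * J i j * v j ≤ |J i j| * |v i * v j| := h1
                _ ≤ |J i j| * q := mul_le_mul_of_nonneg_left h2 (abs_nonneg _)
          _ = C * q := by
              rw [hC, Finset.sum_mul]
              exact Finset.sum_congr rfl fun i _ => (Finset.sum_mul _ _ _).symm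
      have ht_lb : (1:ℝ) ≤ t := by
        have : s - t ≤ C := le_of_mul_le_mul_right hQub hq0
        rw [hs] at this; linarith
      -- conclude
      have habsμ : ‖μ‖ = |t| := by
        rw [← hμreal]; exact (Complex.norm_real t).trans (Real.norm_eq_abs t)
      rw [habsμ, abs_of_pos (by linarith : (0:ℝ) < t)]
      exact ht_ub
    have h0 : (0:ℝ) ≤ s - δ := by linarith
    have hle : specRad A ≤ s - δ := by
      apply Real.sSup_le _ h0
      rintro r ⟨μ, hμ, rfl⟩
      exact hkey μ hμ
    linarith

theorem stmt7 {n : ℕ} [NeZero n] (B : Matrix (Fin n) (Fin n) ℝ) (β lam α : ℝ)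
    (hB1 : B.IsSymm) (hB2 : MatIrred B) (hB3 : IsNsMMat B) (hβ : 0 < β)
    (p : Fin n → ℝ) (hp : ∀ i, 0 < p i) (hpe : B.mulVec p = smallestEig B • p)
    (hlam : smallestEig B < lam)
    (ustar : Fin n → ℝ) (hstar : ∀ i, 0 < ustar i)
    (hstareq : (AU β B ustar).mulVec ustar = lam • ustar)
    (v : ℕ → Fin n → ℝ) (hv0 : v 0 = α • p)
    (hα1 : ∀ i, ustar i < α * p i)
    (hα2 : ∀ i, lam - smallestEig B < β * (α * p i) ^ 2)
    (hrec : ∀ k, (JU β lam B (v k)).mulVec (v (k + 1)) = fun i => 2 * β * (v k i) ^ 3)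
    (hmono : ∀ k, ∀ i, ustar i < v (k + 1) i ∧ v (k + 1) i < v k i) :
    ∀ k, IsNsMMat (JU β lam B (v k)) := by
  have hsymB : ∀ i j, B i j = B j i := by
    intro i j
    have h := congrFun (congrFun hB1 i) j
    rw [Matrix.transpose_apply] at h
    exact h.symm
  obtain ⟨s0, A0, hA0, hρ0, hBeq⟩ := hB3
  have hoffB : ∀ i j, i ≠ j → B i j ≤ 0 := by
    intro i j hij
    rw [hBeq]
    simp only [Matrix.sub_apply, Matrix.smul_apply, Matrix.one_apply_ne hij, smul_eq_mul,
      mul_zero]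
    linarith [hA0 i j]
  have hMentry : ∀ i j, AU β B ustar i j = (if i = j then β * ustar i ^ 2 else 0) + B i j := by
    intro i j
    simp [AU, Matrix.add_apply, Matrix.smul_apply, Matrix.diagonal_apply, mul_ite, mul_zero]
  have hsymM : ∀ i j, AU β B ustar i j = AU β B ustar j i := by
    intro i j
    rcases eq_or_ne i j with rfl | hij
    · rfl
    · rw [hMentry i j, hMentry j i, if_neg hij, if_neg (Ne.symm hij), hsymB i j]
  have hoffM : ∀ i j, i ≠ j → AU β B ustar i j ≤ 0 := by
    intro i j hij
    rw [hMentry i j, if_neg hij]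
    simpa using hoffB i j hij
  have heigM : ∀ i, ∑ j, AU β B ustar i j * ustar j = lam * ustar i := by
    intro i
    have h := congrFun hstareq i
    simpa [Matrix.mulVec, dotProduct, Pi.smul_apply, smul_eq_mul] using h
  have hlow : ∀ k i, ustar i < v k i := by
    intro k
    induction k with
    | zero => intro i; rw [hv0]; simpa [Pi.smul_apply, smul_eq_mul] using hα1 i
    | succ k ih => intro i; exact (hmono k i).1
  intro k
  set c : Fin n → ℝ := fun i => β * (3 * v k i ^ 2 - ustar i ^ 2) with hcdef
  have hJentry : ∀ i j, JU β lam B (v k) i j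
      = AU β B ustar i j + (if i = j then c i - lam else 0) := by
    intro i j
    simp only [hcdef]
    rcases eq_or_ne i j with rfl | hij
    · simp [JU, AU, Matrix.sub_apply, Matrix.add_apply, Matrix.smul_apply,
        Matrix.diagonal_apply_eq, Matrix.one_apply_eq]
      ring
    · simp [JU, AU, Matrix.sub_apply, Matrix.add_apply, Matrix.smul_apply,
        Matrix.diagonal_apply_ne _ hij, Matrix.one_apply_ne hij, hij]
  have hsymJ : ∀ i j, JU β lam B (v k) i j = JU β lam B (v k) j i := by
    intro i j
    rcases eq_or_ne i j with rfl | hij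
    · rfl
    · rw [hJentry i j, hJentry j i, if_neg hij, if_neg (Ne.symm hij), hsymM i j]
  have hoffJ : ∀ i j, i ≠ j → JU β lam B (v k) i j ≤ 0 := by
    intro i j hij
    rw [hJentry i j, if_neg hij]
    simpa using hoffM i j hij
  have hne : (Finset.univ : Finset (Fin n)).Nonempty := Finset.univ_nonempty
  have hcpos : ∀ i, 0 < c i := by
    intro i
    have h1 := hstar i
    have h2 := hlow k i
    have h3 : 0 < 3 * v k i ^ 2 - ustar i ^ 2 := by nlinarith
    rw [hcdef]
    exact mul_pos hβ h3
  set δ0 : ℝ := Finset.univ.inf' hne c with hδ0def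
  have hδ0pos : 0 < δ0 := (Finset.lt_inf'_iff hne).mpr (fun i _ => hcpos i)
  set δ : ℝ := min δ0 1 with hδdef
  have hδpos : 0 < δ := lt_min hδ0pos one_pos
  have hδle : δ ≤ 1 := min_le_right _ _
  have hδc : ∀ i, δ ≤ c i := fun i =>
    (min_le_left _ _).trans (Finset.inf'_le c (Finset.mem_univ i))
  apply nsmmat_of_coercive _ hsymJ hoffJ δ hδpos hδle
  intro x
  have hsplit : ∑ i, ∑ j, x i * JU β lam B (v k) i j * x j
      = (∑ i, ∑ j, x i * AU β B ustar i j * x j) + ∑ i, (c i - lam) * x i ^ 2 := by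
    rw [← Finset.sum_add_distrib]
    refine Finset.sum_congr rfl fun i _ => ?_
    calc ∑ j, x i * JU β lam B (v k) i j * x j
        = ∑ j, (x i * AU β B ustar i j * x j
            + (if i = j then (c i - lam) * x i ^ 2 else 0)) := by
          refine Finset.sum_congr rfl fun j _ => ?_
          rw [hJentry i j]
          rcases eq_or_ne i j with rfl | hij
          · rw [if_pos rfl, if_pos rfl]
            ring
          · simp only [if_neg hij, add_zero]
      _ = ∑ j, x i * AU β B ustar i j * x j + (c i - lam) * x i ^ 2 := by
          rw [Finset.sum_add_distrib]
          congr 1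
          simp
  have hM := quad_lb (AU β B ustar) hsymM hoffM ustar hstar lam heigM x
  have hS1 : δ * ∑ i, x i ^ 2 ≤ ∑ i, c i * x i ^ 2 := by
    rw [Finset.mul_sum]
    exact Finset.sum_le_sum fun i _ => mul_le_mul_of_nonneg_right (hδc i) (sq_nonneg _)
  have hexp : ∑ i, (c i - lam) * x i ^ 2 = (∑ i, c i * x i ^ 2) - lam * ∑ i, x i ^ 2 := by
    rw [Finset.mul_sum, ← Finset.sum_sub_distrib]
    exact Finset.sum_congr rfl fun i _ => by ring
  linarith [hsplit, hM, hS1, hexp]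
end

section
/- Let B be a symmetric irreducible nonsingular M-matrix, β > 0, and suppose (u*, λ*) is a positive solution of β·diag(u^[2])u + Bu = λu with ‖u*‖₂ = 1, with λ_min(B) < a < λ* < b. Let u(λ) be the unique positive solution of the unconstrained problem for each λ ∈ (λ_min(B), ∞) and let u₀ > u(b) be an initial upper bound. If λ_k is the midpoint produced at step k of bisection on [a, b] (so |λ_k − λ*| ≤ (b−a)/2^k) and u_k = u(λ_k), then ‖u_k − u*‖₂ ≤ M(b−a)/2^k, where M = ‖u₀‖₂ / (2β·min(u(a)^[2])). -/
open Matrix Filter Topology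

section Helpers

/-- Quadratic form of a symmetric Z-matrix with a positive kernel vector is PSD. -/
private lemma quadZ {n : ℕ} (S : Fin n → Fin n → ℝ)
    (hsym : ∀ i j, S i j = S j i) (hoff : ∀ i j, i ≠ j → S i j ≤ 0)
    (v : Fin n → ℝ) (hv : ∀ i, 0 < v i)
    (hker : ∀ i, ∑ j, S i j * v j = 0) (x : Fin n → ℝ) :
    0 ≤ ∑ i, ∑ j, x i * (S i j * x j) := by
  have hT : ∑ i, ∑ j, S i j * v j * (x i ^ 2 / v i) = 0 := by
    refine Finset.sum_eq_zero fun i _ => ?_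
    rw [← Finset.sum_mul, hker i, zero_mul]
  have hT' : ∑ i, ∑ j, S i j * v i * (x j ^ 2 / v j) = 0 := by
    rw [Finset.sum_comm]
    refine Finset.sum_eq_zero fun j _ => ?_
    have h0 : ∑ i, S i j * v i = 0 := by
      rw [Finset.sum_congr rfl fun i _ => by rw [hsym i j]]
      exact hker j
    rw [← Finset.sum_mul, h0, zero_mul]
  have key : (2:ℝ) * ∑ i, ∑ j, x i * (S i j * x j)
      = ∑ i, ∑ j, (- S i j) * ((v j * x i - v i * x j) ^ 2 / (v i * v j)) := by
    have e : ∀ i j : Fin n, (- S i j) * ((v j * x i - v i * x j) ^ 2 / (v i * v j))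
        = 2 * (x i * (S i j * x j)) - S i j * v j * (x i ^ 2 / v i)
          - S i j * v i * (x j ^ 2 / v j) := by
      intro i j
      have hvi := (hv i).ne'
      have hvj := (hv j).ne'
      field_simp
      ring
    calc (2:ℝ) * ∑ i, ∑ j, x i * (S i j * x j)
        = ∑ i, ∑ j, 2 * (x i * (S i j * x j)) := by
          rw [Finset.mul_sum]
          exact Finset.sum_congr rfl fun i _ => by rw [Finset.mul_sum]
      _ = (∑ i, ∑ j, ((- S i j) * ((v j * x i - v i * x j) ^ 2 / (v i * v j))
            + S i j * v j * (x i ^ 2 / v i) + S i j * v i * (x j ^ 2 / v j))) := by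
          refine Finset.sum_congr rfl fun i _ => Finset.sum_congr rfl fun j _ => ?_
          rw [e i j]; ring
      _ = (∑ i, ∑ j, (- S i j) * ((v j * x i - v i * x j) ^ 2 / (v i * v j)))
            + (∑ i, ∑ j, S i j * v j * (x i ^ 2 / v i))
            + (∑ i, ∑ j, S i j * v i * (x j ^ 2 / v j)) := by
          rw [← Finset.sum_add_distrib, ← Finset.sum_add_distrib]
          refine Finset.sum_congr rfl fun i _ => ?_
          rw [← Finset.sum_add_distrib, ← Finset.sum_add_distrib]
      _ = ∑ i, ∑ j, (- S i j) * ((v j * x i - v i * x j) ^ 2 / (v i * v j)) := by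
          rw [hT, hT', add_zero, add_zero]
  have hpos : 0 ≤ ∑ i, ∑ j, (- S i j) * ((v j * x i - v i * x j) ^ 2 / (v i * v j)) := by
    refine Finset.sum_nonneg fun i _ => Finset.sum_nonneg fun j _ => ?_
    by_cases hij : i = j
    · subst hij; simp
    · exact mul_nonneg (neg_nonneg.2 (hoff i j hij))
        (div_nonneg (sq_nonneg _) (mul_nonneg (hv i).le (hv j).le))
  have h2 : 0 ≤ (2:ℝ) * ∑ i, ∑ j, x i * (S i j * x j) := by rw [key]; exact hpos
  linarith

private lemma rowN {n : ℕ} (B : Matrix (Fin n) (Fin n) ℝ) (c : Fin n → ℝ) (z : Fin n → ℝ)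
    (i : Fin n) :
    ∑ j, ((if i = j then c i else 0) + B i j) * z j = c i * z i + ∑ j, B i j * z j := by
  simp [add_mul, Finset.sum_add_distrib, ite_mul, zero_mul]

/-- Monotonicity of positive solutions in `lam`. -/
private lemma mono_aux {n : ℕ} (B : Matrix (Fin n) (Fin n) ℝ) (β : ℝ)
    (hsym : ∀ i j, B i j = B j i) (hoff : ∀ i j, i ≠ j → B i j ≤ 0) (hβ : 0 < β)
    (lam1 lam2 : ℝ) (hle : lam1 ≤ lam2) (x y : Fin n → ℝ)
    (hx : ∀ i, 0 < x i) (hy : ∀ i, 0 < y i)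
    (hex : ∀ i, β * x i ^ 3 + ∑ j, B i j * x j = lam1 * x i)
    (hey : ∀ i, β * y i ^ 3 + ∑ j, B i j * y j = lam2 * y i) :
    ∀ i, x i ≤ y i := by
  set N : Fin n → Fin n → ℝ := fun i j =>
    (if i = j then β * (y i ^ 2 + x i * y i + x i ^ 2) - lam2 else 0) + B i j with hN
  set M : Fin n → Fin n → ℝ := fun i j =>
    (if i = j then β * y i ^ 2 - lam2 else 0) + B i j with hM
  have hNw : ∀ i, ∑ j, N i j * (y j - x j) = (lam2 - lam1) * x i := by
    intro i
    rw [hN]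
    rw [rowN B (fun i => β * (y i ^ 2 + x i * y i + x i ^ 2) - lam2) (fun j => y j - x j) i]
    have h3 : ∑ j, B i j * (y j - x j) = (∑ j, B i j * y j) - ∑ j, B i j * x j := by
      rw [← Finset.sum_sub_distrib]
      exact Finset.sum_congr rfl fun j _ => by ring
    rw [h3]
    linear_combination hey i - hex i
  have hMq : ∀ z : Fin n → ℝ, 0 ≤ ∑ i, ∑ j, z i * (M i j * z j) := by
    intro z
    refine quadZ M ?_ ?_ y hy ?_ z
    · intro i j
      by_cases h : i = j
      · subst h; rfl
      · simp [hM, h, Ne.symm h, hsym i j]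
    · intro i j hij
      simpa [hM, hij] using hoff i j hij
    · intro i
      rw [hM, rowN B (fun i => β * y i ^ 2 - lam2) y i]
      linear_combination hey i
  set wm : Fin n → ℝ := fun i => max (x i - y i) 0 with hwm
  set wp : Fin n → ℝ := fun i => max (y i - x i) 0 with hwp
  have hwm0 : ∀ i, 0 ≤ wm i := fun i => le_max_right _ _
  have hwp0 : ∀ i, 0 ≤ wp i := fun i => le_max_right _ _
  have hperp : ∀ i, wm i * wp i = 0 := by
    intro i
    rcases le_total (x i) (y i) with h | h
    · have h0 : wm i = 0 := max_eq_right (by linarith)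
      rw [h0, zero_mul]
    · have h0 : wp i = 0 := max_eq_right (by linarith)
      rw [h0, mul_zero]
  have hdiff : ∀ i, wp i - wm i = y i - x i := by
    intro i
    rcases le_total (x i) (y i) with h | h
    · rw [hwp, hwm]
      simp only
      rw [max_eq_left (by linarith), max_eq_right (by linarith)]
      ring
    · rw [hwp, hwm]
      simp only
      rw [max_eq_right (by linarith), max_eq_left (by linarith)]
      ring
  have s1' : 0 ≤ ∑ i, ∑ j, wm i * (N i j * (y j - x j)) := by
    have hrw : ∀ i : Fin n, ∑ j, wm i * (N i j * (y j - x j)) = wm i * ((lam2 - lam1) * x i) := by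
      intro i
      rw [← Finset.mul_sum, hNw i]
    rw [Finset.sum_congr rfl fun i _ => hrw i]
    exact Finset.sum_nonneg fun i _ =>
      mul_nonneg (hwm0 i) (mul_nonneg (by linarith) (hx i).le)
  have s2 : ∑ i, ∑ j, wm i * (N i j * wp j) ≤ 0 := by
    refine Finset.sum_nonpos fun i _ => Finset.sum_nonpos fun j _ => ?_
    by_cases h : i = j
    · subst h
      rw [show wm i * (N i i * wp i) = N i i * (wm i * wp i) by ring, hperp i, mul_zero]
    · have hb : N i j ≤ 0 := by simpa [hN, h] using hoff i j h
      have hprod : 0 ≤ wm i * wp j := mul_nonneg (hwm0 i) (hwp0 j)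
      nlinarith
  have s3 : ∑ i, ∑ j, wm i * (N i j * wm j) ≤ 0 := by
    have hcalc : ∑ i, ∑ j, wm i * (N i j * wm j)
        = (∑ i, ∑ j, wm i * (N i j * wp j)) - ∑ i, ∑ j, wm i * (N i j * (y j - x j)) := by
      rw [← Finset.sum_sub_distrib]
      refine Finset.sum_congr rfl fun i _ => ?_
      rw [← Finset.sum_sub_distrib]
      refine Finset.sum_congr rfl fun j _ => ?_
      rw [← hdiff j]
      ring
    linarith [hcalc, s1', s2]
  have hdecomp : ∑ i, ∑ j, wm i * (N i j * wm j)
      = (∑ i, ∑ j, wm i * (M i j * wm j)) + ∑ i, β * (x i * (x i + y i)) * wm i ^ 2 := by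
    rw [← Finset.sum_add_distrib]
    refine Finset.sum_congr rfl fun i _ => ?_
    have hterm : ∀ j, wm i * (N i j * wm j)
        = wm i * (M i j * wm j) + (if i = j then β * (x i * (x i + y i)) * wm i ^ 2 else 0) := by
      intro j
      by_cases h : i = j
      · subst h; simp only [hN, hM, if_pos rfl, if_true, eq_self_iff_true]; ring
      · simp only [hN, hM, if_neg h, add_zero]
    rw [Finset.sum_congr rfl fun j _ => hterm j, Finset.sum_add_distrib, Finset.sum_ite_eq]
    simp
  have hdiag : ∑ i, β * (x i * (x i + y i)) * wm i ^ 2 ≤ 0 := by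
    have := hMq wm
    linarith [hdecomp, s3]
  have hnn : ∀ i ∈ Finset.univ (α := Fin n), 0 ≤ β * (x i * (x i + y i)) * wm i ^ 2 := by
    intro i _
    have h1 := hx i
    have h2 := hy i
    have := sq_nonneg (wm i)
    positivity
  have hzero := (Finset.sum_eq_zero_iff_of_nonneg hnn).mp
    (le_antisymm hdiag (Finset.sum_nonneg hnn))
  intro i
  have h0 := hzero i (Finset.mem_univ i)
  have hc : 0 < β * (x i * (x i + y i)) :=
    mul_pos hβ (mul_pos (hx i) (by linarith [hx i, hy i]))
  have hwmz : wm i = 0 := by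
    rcases mul_eq_zero.mp h0 with h | h
    · exact absurd h hc.ne'
    · exact (pow_eq_zero_iff two_ne_zero).mp h
  have hle' : x i - y i ≤ wm i := le_max_left _ _
  rw [hwmz] at hle'
  linarith

/-- The key Lipschitz-type estimate. -/
private lemma est_aux {n : ℕ} (B : Matrix (Fin n) (Fin n) ℝ) (β : ℝ)
    (hsym : ∀ i j, B i j = B j i) (hoff : ∀ i j, i ≠ j → B i j ≤ 0) (hβ : 0 < β)
    (lam1 lam2 : ℝ) (x y : Fin n → ℝ)
    (hx : ∀ i, 0 < x i) (hy : ∀ i, 0 < y i)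
    (hex : ∀ i, β * x i ^ 3 + ∑ j, B i j * x j = lam1 * x i)
    (hey : ∀ i, β * y i ^ 3 + ∑ j, B i j * y j = lam2 * y i)
    (c : ℝ) (hc : ∀ i, 2 * c ≤ y i * (x i + y i)) :
    2 * β * c * (∑ i, (x i - y i) ^ 2)
      ≤ |lam1 - lam2| * (Real.sqrt (∑ i, y i ^ 2) * Real.sqrt (∑ i, (x i - y i) ^ 2)) := by
  set w : Fin n → ℝ := fun i => x i - y i with hw
  set N : Fin n → Fin n → ℝ := fun i j =>
    (if i = j then β * (x i ^ 2 + x i * y i + y i ^ 2) - lam1 else 0) + B i j with hN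
  set M : Fin n → Fin n → ℝ := fun i j =>
    (if i = j then β * x i ^ 2 - lam1 else 0) + B i j with hM
  have hNw : ∀ i, ∑ j, N i j * w j = (lam1 - lam2) * y i := by
    intro i
    rw [hN, rowN B (fun i => β * (x i ^ 2 + x i * y i + y i ^ 2) - lam1) w i]
    have h3 : ∑ j, B i j * w j = (∑ j, B i j * x j) - ∑ j, B i j * y j := by
      rw [← Finset.sum_sub_distrib]
      exact Finset.sum_congr rfl fun j _ => by rw [hw]; ring
    rw [h3]
    have h4 : w i = x i - y i := rfl
    rw [h4]
    linear_combination hex i - hey i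
  have hMq : 0 ≤ ∑ i, ∑ j, w i * (M i j * w j) := by
    refine quadZ M ?_ ?_ x hx ?_ w
    · intro i j
      by_cases h : i = j
      · subst h; rfl
      · simp [hM, h, Ne.symm h, hsym i j]
    · intro i j hij
      simpa [hM, hij] using hoff i j hij
    · intro i
      rw [hM, rowN B (fun i => β * x i ^ 2 - lam1) x i]
      linear_combination hex i
  have hQ1 : ∑ i, ∑ j, w i * (N i j * w j) = (lam1 - lam2) * ∑ i, w i * y i := by
    rw [Finset.mul_sum]
    refine Finset.sum_congr rfl fun i _ => ?_
    rw [← Finset.mul_sum, hNw i]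
    ring
  have hdecomp : ∑ i, ∑ j, w i * (N i j * w j)
      = (∑ i, ∑ j, w i * (M i j * w j)) + ∑ i, β * (y i * (x i + y i)) * w i ^ 2 := by
    rw [← Finset.sum_add_distrib]
    refine Finset.sum_congr rfl fun i _ => ?_
    have hterm : ∀ j, w i * (N i j * w j)
        = w i * (M i j * w j) + (if i = j then β * (y i * (x i + y i)) * w i ^ 2 else 0) := by
      intro j
      by_cases h : i = j
      · subst h; simp only [hN, hM, if_pos rfl, if_true, eq_self_iff_true]; ring
      · simp only [hN, hM, if_neg h, add_zero]
    rw [Finset.sum_congr rfl fun j _ => hterm j, Finset.sum_add_distrib, Finset.sum_ite_eq]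
    simp
  have hlow : 2 * β * c * (∑ i, w i ^ 2) ≤ ∑ i, ∑ j, w i * (N i j * w j) := by
    have h1 : ∑ i, 2 * β * c * w i ^ 2 ≤ ∑ i, β * (y i * (x i + y i)) * w i ^ 2 := by
      refine Finset.sum_le_sum fun i _ => ?_
      have h2 := hc i
      have h3 := sq_nonneg (w i)
      have h4 : 0 ≤ (y i * (x i + y i) - 2 * c) * w i ^ 2 := mul_nonneg (by linarith) h3
      nlinarith [mul_nonneg hβ.le h4]
    rw [hdecomp, ← Finset.mul_sum] at *
    linarith
  have hcs : (lam1 - lam2) * ∑ i, w i * y i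
      ≤ |lam1 - lam2| * (Real.sqrt (∑ i, y i ^ 2) * Real.sqrt (∑ i, w i ^ 2)) := by
    have h1 : (lam1 - lam2) * ∑ i, w i * y i ≤ |lam1 - lam2| * |∑ i, w i * y i| := by
      rw [← abs_mul]
      exact le_abs_self _
    have h2 : |∑ i, w i * y i| ≤ Real.sqrt (∑ i, y i ^ 2) * Real.sqrt (∑ i, w i ^ 2) := by
      have h3 := Finset.sum_mul_sq_le_sq_mul_sq Finset.univ w y
      have h4 : |∑ i, w i * y i| = Real.sqrt ((∑ i, w i * y i) ^ 2) :=
        (Real.sqrt_sq_eq_abs _).symm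
      rw [h4, mul_comm (Real.sqrt _)]
      calc Real.sqrt ((∑ i, w i * y i) ^ 2)
          ≤ Real.sqrt ((∑ i, w i ^ 2) * ∑ i, y i ^ 2) := Real.sqrt_le_sqrt h3
        _ = Real.sqrt (∑ i, w i ^ 2) * Real.sqrt (∑ i, y i ^ 2) :=
            Real.sqrt_mul (Finset.sum_nonneg fun i _ => sq_nonneg _) _
    calc (lam1 - lam2) * ∑ i, w i * y i
        ≤ |lam1 - lam2| * |∑ i, w i * y i| := h1
      _ ≤ |lam1 - lam2| * (Real.sqrt (∑ i, y i ^ 2) * Real.sqrt (∑ i, w i ^ 2)) :=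
          mul_le_mul_of_nonneg_left h2 (abs_nonneg _)
  calc 2 * β * c * (∑ i, (x i - y i) ^ 2)
      ≤ ∑ i, ∑ j, w i * (N i j * w j) := hlow
    _ = (lam1 - lam2) * ∑ i, w i * y i := hQ1
    _ ≤ |lam1 - lam2| * (Real.sqrt (∑ i, y i ^ 2) * Real.sqrt (∑ i, (x i - y i) ^ 2)) := hcs

end Helpers

theorem stmt8 {n : ℕ} [NeZero n] (B : Matrix (Fin n) (Fin n) ℝ) (β : ℝ)
    (hB1 : B.IsSymm) (hB2 : MatIrred B) (hB3 : IsNsMMat B) (hβ : 0 < β)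
    (ustar : Fin n → ℝ) (lamstar a b : ℝ)
    (hstar : ∀ i, 0 < ustar i) (hstarn : vecNorm ustar = 1)
    (hstareq : (AU β B ustar).mulVec ustar = lamstar • ustar)
    (ha1 : smallestEig B < a) (ha2 : a < lamstar) (hb : lamstar < b)
    (u : ℝ → Fin n → ℝ)
    (hsol : ∀ lam, smallestEig B < lam →
      (∀ i, 0 < u lam i) ∧ (AU β B (u lam)).mulVec (u lam) = lam • u lam)
    (huniq : ∀ lam, smallestEig B < lam → ∀ v : Fin n → ℝ,
      (∀ i, 0 < v i) → (AU β B v).mulVec v = lam • v → v = u lam)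
    (u₀ : Fin n → ℝ) (hu₀ : ∀ i, u b i < u₀ i)
    (lamk : ℕ → ℝ) (hlk : ∀ k, a ≤ lamk k ∧ lamk k ≤ b)
    (hbis : ∀ k, |lamk k - lamstar| ≤ (b - a) / 2 ^ k) :
    ∀ k, vecNorm (u (lamk k) - ustar) ≤
      (vecNorm u₀ / (2 * β * (⨅ i, (u a i) ^ 2))) * (b - a) / 2 ^ k := by
  classical
  have hne : Nonempty (Fin n) := ⟨⟨0, Nat.pos_of_ne_zero (NeZero.ne n)⟩⟩
  obtain ⟨s, A, hA, -, hBeq⟩ := hB3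
  have hoff : ∀ i j, i ≠ j → B i j ≤ 0 := by
    intro i j hij
    have h1 : B i j = s * (if i = j then 1 else 0) - A i j := by
      rw [hBeq]
      simp [Matrix.sub_apply, Matrix.smul_apply, Matrix.one_apply, smul_eq_mul]
    rw [h1, if_neg hij]
    have := hA i j
    linarith
  have hsymc : ∀ i j, B i j = B j i := fun i j => (hB1.apply j i)
  have hsb : smallestEig B < b := lt_trans ha1 (lt_trans ha2 hb)
  have hslam : smallestEig B < lamstar := lt_trans ha1 ha2
  have hslk : ∀ k, smallestEig B < lamk k := fun k => lt_of_lt_of_le ha1 (hlk k).1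
  have hcomp : ∀ (lam : ℝ) (v : Fin n → ℝ), (AU β B v).mulVec v = lam • v →
      ∀ i, β * v i ^ 3 + ∑ j, B i j * v j = lam * v i := by
    intro lam v h i
    have h2 := congrFun h i
    simp only [AU, Matrix.add_mulVec, Matrix.smul_mulVec, Pi.add_apply, Pi.smul_apply,
      Matrix.mulVec_diagonal, smul_eq_mul] at h2
    have h3 : B.mulVec v i = ∑ j, B i j * v j := rfl
    rw [h3] at h2
    linear_combination h2
  have hua := hsol a ha1
  have hustar_eq : ustar = u lamstar := huniq lamstar hslam ustar hstar hstareq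
  have hmono : ∀ lam mu, smallestEig B < lam → smallestEig B < mu → lam ≤ mu →
      ∀ i, u lam i ≤ u mu i := by
    intro lam mu h1 h2 hle
    exact mono_aux B β hsymc hoff hβ lam mu hle (u lam) (u mu)
      (hsol lam h1).1 (hsol mu h2).1
      (hcomp lam (u lam) (hsol lam h1).2) (hcomp mu (u mu) (hsol mu h2).2)
  set c : ℝ := ⨅ i, (u a i) ^ 2 with hcdef
  have hcpos : 0 < c := by
    have hmem : sInf (Set.range fun i => (u a i) ^ 2) ∈ Set.range fun i => (u a i) ^ 2 :=
      (Set.range_nonempty _).csInf_mem (Set.finite_range _)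
    rw [← sInf_range] at hcdef
    rw [hcdef]
    obtain ⟨i, hi⟩ := hmem
    rw [← hi]
    exact pow_pos (hua.1 i) 2
  have hcle : ∀ i, c ≤ (u a i) ^ 2 := fun i =>
    ciInf_le (Finite.bddBelow_range _) i
  intro k
  set x : Fin n → ℝ := u (lamk k) with hxdef
  have hxpos : ∀ i, 0 < x i := (hsol _ (hslk k)).1
  have hxa : ∀ i, u a i ≤ x i := hmono a (lamk k) ha1 (hslk k) (hlk k).1
  have hya : ∀ i, u a i ≤ ustar i := by
    rw [hustar_eq]
    exact hmono a lamstar ha1 hslam ha2.le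
  have hlow : ∀ i, 2 * c ≤ ustar i * (x i + ustar i) := by
    intro i
    have h1 := hxa i
    have h2 := hya i
    have h3 := hua.1 i
    have h4 : u a i * (u a i + u a i) ≤ ustar i * (x i + ustar i) :=
      mul_le_mul h2 (by linarith) (by linarith) (by linarith)
    have h5 := hcle i
    nlinarith
  have hestar : ∀ i, β * ustar i ^ 3 + ∑ j, B i j * ustar j = lamstar * ustar i :=
    hcomp lamstar ustar hstareq
  have hest := est_aux B β hsymc hoff hβ (lamk k) lamstar x ustar hxpos hstar
    (hcomp (lamk k) x (hsol _ (hslk k)).2) hestar c hlow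
  -- norm of ustar is at most norm of u₀
  have hnormy : Real.sqrt (∑ i, ustar i ^ 2) ≤ vecNorm u₀ := by
    rw [vecNorm]
    apply Real.sqrt_le_sqrt
    apply Finset.sum_le_sum
    intro i _
    have h1 : ustar i ≤ u b i := by
      rw [hustar_eq]
      exact hmono lamstar b hslam hsb hb.le i
    have h2 := hu₀ i
    exact pow_le_pow_left₀ (hstar i).le (by linarith) 2
  set S : ℝ := ∑ i, (x i - ustar i) ^ 2 with hSdef
  have hS0 : 0 ≤ S := Finset.sum_nonneg fun i _ => sq_nonneg _
  have hgoal_lhs : vecNorm (u (lamk k) - ustar) = Real.sqrt S := by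
    rw [vecNorm, hSdef]
    congr 1
  rw [hgoal_lhs]
  have h2k : (0:ℝ) < 2 ^ k := by positivity
  have hba : 0 ≤ b - a := by linarith
  have hKn : 0 ≤ vecNorm u₀ := Real.sqrt_nonneg _
  have habs := hbis k
  have hsqS : 0 ≤ Real.sqrt S := Real.sqrt_nonneg _
  have hchain : 2 * β * c * S ≤ ((b - a) / 2 ^ k) * (vecNorm u₀ * Real.sqrt S) := by
    calc 2 * β * c * S
        ≤ |lamk k - lamstar| * (Real.sqrt (∑ i, ustar i ^ 2) * Real.sqrt S) := hest
      _ ≤ ((b - a) / 2 ^ k) * (vecNorm u₀ * Real.sqrt S) := by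
          apply mul_le_mul habs
          · exact mul_le_mul_of_nonneg_right hnormy (Real.sqrt_nonneg _)
          · exact mul_nonneg (Real.sqrt_nonneg _) hsqS
          · positivity
  rcases eq_or_lt_of_le hsqS with hr0 | hrpos
  · rw [← hr0]
    positivity
  · have hS_eq : S = Real.sqrt S * Real.sqrt S := (Real.mul_self_sqrt hS0).symm
    have hmain : 2 * β * c * Real.sqrt S ≤ (b - a) / 2 ^ k * vecNorm u₀ := by
      have h1 : (2 * β * c * Real.sqrt S) * Real.sqrt S
          ≤ ((b - a) / 2 ^ k * vecNorm u₀) * Real.sqrt S := by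
        calc (2 * β * c * Real.sqrt S) * Real.sqrt S
            = 2 * β * c * S := by
              linear_combination (2 * β * c) * (Real.mul_self_sqrt hS0)
          _ ≤ ((b - a) / 2 ^ k) * (vecNorm u₀ * Real.sqrt S) := hchain
          _ = ((b - a) / 2 ^ k * vecNorm u₀) * Real.sqrt S := by ring
      exact le_of_mul_le_mul_right h1 hrpos
    have hden : 0 < 2 * β * c := by positivity
    rw [show (vecNorm u₀ / (2 * β * c)) * (b - a) / 2 ^ k
        = ((b - a) / 2 ^ k * vecNorm u₀) / (2 * β * c) by field_simp]
    rw [le_div_iff₀ hden]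
    linarith
end

section
/- Let B be a symmetric irreducible nonsingular M-matrix, β > 0, λ > λ_min(B), and let {u_l} be the monotone Newton iterates converging to the positive solution u* of β·diag(u^[2])u + Bu = λu, starting from u₀ satisfying the standard conditions. Suppose the map r(u) = β·diag(u^[2])u + Bu − λu has Jacobian ∇r(u) = 3β·diag(u^[2]) + B − λI whose derivative is Lipschitz on the order interval [u*, u₀] with constant M₁. Then for any l with u* < u_{l+1} < u_l < u₀, ‖r(u_{l+1})‖ ≤ (M₁ / (8β²·min(u*)⁴))·‖r(u_l)‖², i.e., the Newton iteration converges locally quadratically with explicit constant. -/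
open Matrix Filter Topology

section Helpers
variable {n : ℕ}

lemma vecNorm_nonneg (u : Fin n → ℝ) : 0 ≤ vecNorm u := Real.sqrt_nonneg _

lemma vecNorm_sq (u : Fin n → ℝ) : vecNorm u ^ 2 = ∑ i, u i ^ 2 :=
  Real.sq_sqrt (by positivity)

lemma vecNorm_le_mul {a d : Fin n → ℝ} {c : ℝ} (hc : 0 ≤ c)
    (h : ∀ i, |a i| ≤ c * |d i|) : vecNorm a ≤ c * vecNorm d := by
  have h1 : ∑ i, a i ^ 2 ≤ c ^ 2 * ∑ i, d i ^ 2 := by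
    rw [Finset.mul_sum]
    refine Finset.sum_le_sum fun i _ => ?_
    have := h i
    nlinarith [abs_nonneg (a i), abs_nonneg (d i), sq_abs (a i), sq_abs (d i)]
  calc vecNorm a = Real.sqrt (∑ i, a i ^ 2) := rfl
    _ ≤ Real.sqrt (c ^ 2 * ∑ i, d i ^ 2) := Real.sqrt_le_sqrt h1
    _ = c * vecNorm d := by
        rw [Real.sqrt_mul (sq_nonneg c), Real.sqrt_sq hc]; rfl

lemma sum_mul_le (a b : Fin n → ℝ) : (∑ i, a i * b i) ≤ vecNorm a * vecNorm b := by
  have h := Finset.sum_mul_sq_le_sq_mul_sq Finset.univ a b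
  have h2 : (∑ i, a i * b i) ≤ |∑ i, a i * b i| := le_abs_self _
  have h3 : |∑ i, a i * b i| = Real.sqrt ((∑ i, a i * b i) ^ 2) :=
    (Real.sqrt_sq_eq_abs _).symm
  calc (∑ i, a i * b i) ≤ Real.sqrt ((∑ i, a i * b i) ^ 2) := h3 ▸ h2
    _ ≤ Real.sqrt ((∑ i, a i ^ 2) * ∑ i, b i ^ 2) := Real.sqrt_le_sqrt h
    _ = vecNorm a * vecNorm b := Real.sqrt_mul (by positivity) _

lemma matNorm_diag_ge (w : Fin n → ℝ) (i : Fin n) :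
    |w i| ≤ matNorm (Matrix.diagonal w) := by
  apply le_csSup
  · refine ⟨Real.sqrt (∑ j, w j ^ 2), fun r hr => ?_⟩
    obtain ⟨x, hx, rfl⟩ := hr
    have hxs : ∑ j, x j ^ 2 ≤ 1 := by
      unfold vecNorm at hx
      have := Real.sq_sqrt (show (0:ℝ) ≤ ∑ j, x j ^ 2 by positivity)
      nlinarith [Real.sqrt_nonneg (∑ j, x j ^ 2)]
    apply Real.sqrt_le_sqrt
    refine Finset.sum_le_sum fun j _ => ?_
    have hxj : x j ^ 2 ≤ 1 :=
      le_trans (Finset.single_le_sum (fun k _ => sq_nonneg (x k)) (Finset.mem_univ j)) hxs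
    have : (Matrix.diagonal w).mulVec x j = w j * x j := Matrix.mulVec_diagonal _ _ _
    rw [this]
    nlinarith [sq_nonneg (w j)]
  · refine ⟨Pi.single i 1, ?_, ?_⟩
    · unfold vecNorm
      have : ∑ j, (Pi.single i 1 : Fin n → ℝ) j ^ 2 = 1 := by
        rw [Finset.sum_eq_single i]
        · simp
        · intro j _ hj; simp [Pi.single_apply, hj]
        · simp
      rw [this, Real.sqrt_one]
    · unfold vecNorm
      have : ∑ j, ((Matrix.diagonal w).mulVec (Pi.single i 1)) j ^ 2 = w i ^ 2 := by
        rw [Finset.sum_eq_single i]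
        · rw [Matrix.mulVec_diagonal]; simp
        · intro j _ hj; rw [Matrix.mulVec_diagonal]; simp [Pi.single_apply, hj]
        · simp
      rw [this, Real.sqrt_sq_eq_abs]

lemma quad_nonneg (M : Matrix (Fin n) (Fin n) ℝ) (u : Fin n → ℝ)
    (hsym : ∀ i j, M i j = M j i) (hoff : ∀ i j, i ≠ j → M i j ≤ 0)
    (hu : ∀ i, 0 < u i) (heq : ∀ i, ∑ j, M i j * u j = 0) (d : Fin n → ℝ) :
    0 ≤ ∑ i, ∑ j, M i j * d i * d j := by
  have key : ∀ i j, M i j * (u j * d i ^ 2 / (2 * u i) + u i * d j ^ 2 / (2 * u j))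
      ≤ M i j * d i * d j := by
    intro i j
    have h2ui : (0:ℝ) < 2 * u i := by linarith [hu i]
    have h2uj : (0:ℝ) < 2 * u j := by linarith [hu j]
    rcases eq_or_ne i j with rfl | hij
    · have hne : u i ≠ 0 := (hu i).ne'
      rw [show u i * d i ^ 2 / (2 * u i) + u i * d i ^ 2 / (2 * u i) = d i * d i from by
        field_simp; ring]
      exact le_of_eq (by ring)
    · have h1 : d i * d j ≤ u j * d i ^ 2 / (2 * u i) + u i * d j ^ 2 / (2 * u j) := by
        rw [div_add_div _ _ h2ui.ne' h2uj.ne', le_div_iff₀ (mul_pos h2ui h2uj)]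
        nlinarith [sq_nonneg (u j * d i - u i * d j), hu i, hu j]
      have h2 := hoff i j hij
      nlinarith [h1, h2]
  have hsum : ∑ i, ∑ j, M i j * (u j * d i ^ 2 / (2 * u i) + u i * d j ^ 2 / (2 * u j)) = 0 := by
    have split : ∀ i j, M i j * (u j * d i ^ 2 / (2 * u i) + u i * d j ^ 2 / (2 * u j))
        = M i j * u j * (d i ^ 2 / (2 * u i)) + M i j * u i * (d j ^ 2 / (2 * u j)) := by
      intro i j; ring
    simp_rw [split, Finset.sum_add_distrib]
    have e1 : ∑ i, ∑ j, M i j * u j * (d i ^ 2 / (2 * u i)) = 0 := by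
      rw [Finset.sum_eq_zero]
      intro i _
      rw [← Finset.sum_mul, heq i, zero_mul]
    have e2 : ∑ i, ∑ j, M i j * u i * (d j ^ 2 / (2 * u j)) = 0 := by
      rw [Finset.sum_comm]
      rw [Finset.sum_eq_zero]
      intro j _
      have : ∀ i, M i j * u i * (d j ^ 2 / (2 * u j)) = M j i * u i * (d j ^ 2 / (2 * u j)) := by
        intro i; rw [hsym i j]
      simp_rw [this, ← Finset.sum_mul, heq j, zero_mul]
    rw [e1, e2, add_zero]
  calc (0:ℝ) = ∑ i, ∑ j, M i j * (u j * d i ^ 2 / (2 * u i) + u i * d j ^ 2 / (2 * u j)) := hsum.symm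
    _ ≤ ∑ i, ∑ j, M i j * d i * d j :=
        Finset.sum_le_sum fun i _ => Finset.sum_le_sum fun j _ => key i j

end Helpers

set_option maxHeartbeats 2000000 in
theorem stmt10_aux {n : ℕ} [NeZero n] (B : Matrix (Fin n) (Fin n) ℝ) (β lam M₁ : ℝ)
    (hB1 : B.IsSymm) (hB2 : MatIrred B) (hB3 : IsNsMMat B) (hβ : 0 < β)
    (hlam : smallestEig B < lam)
    (ustar : Fin n → ℝ) (hstar : ∀ i, 0 < ustar i)
    (hstareq : (AU β B ustar).mulVec ustar = lam • ustar)
    (v : ℕ → Fin n → ℝ)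
    (hrec : ∀ k, (JU β lam B (v k)).mulVec (v (k + 1)) = fun i => 2 * β * (v k i) ^ 3)
    (hLip : ∀ x y : Fin n → ℝ,
      (∀ i, ustar i ≤ x i ∧ x i ≤ v 0 i) → (∀ i, ustar i ≤ y i ∧ y i ≤ v 0 i) →
      matNorm (JU β lam B x - JU β lam B y) ≤ M₁ * vecNorm (x - y)) :
    ∀ l, (∀ i, ustar i < v (l + 1) i ∧ v (l + 1) i < v l i ∧ v l i < v 0 i) →
      vecNorm ((AU β B (v (l + 1))).mulVec (v (l + 1)) - lam • v (l + 1)) ≤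
        (M₁ / (8 * β ^ 2 * (⨅ i, ustar i) ^ 4)) *
          vecNorm ((AU β B (v l)).mulVec (v l) - lam • v l) ^ 2 := by
  intro l h
  set x := v l with hxdef
  set y := v (l + 1) with hydef
  set m := (⨅ i, ustar i) with hmdef
  have hnem : Nonempty (Fin n) := ⟨⟨0, Nat.pos_of_ne_zero (NeZero.ne n)⟩⟩
  have hmle : ∀ i, m ≤ ustar i := fun i =>
    ciInf_le (Set.Finite.bddBelow (Set.finite_range _)) i
  obtain ⟨i0, -, hi0⟩ := Finset.exists_min_image (Finset.univ : Finset (Fin n)) ustar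
    ⟨Classical.arbitrary (Fin n), Finset.mem_univ _⟩
  have hmeq : m = ustar i0 := le_antisymm (hmle i0)
    (le_ciInf fun i => hi0 i (Finset.mem_univ i))
  have hmpos : 0 < m := hmeq ▸ hstar i0
  set Rl : Fin n → ℝ := fun i => β * x i ^ 3 + B.mulVec x i - lam * x i with hRldef
  set Ry : Fin n → ℝ := fun i => β * y i ^ 3 + B.mulVec y i - lam * y i with hRydef
  set d : Fin n → ℝ := fun i => y i - x i with hddef
  -- residual identifications
  have hgl : (AU β B x).mulVec x - lam • x = Rl := by
    funext i
    simp only [AU, Matrix.add_mulVec, Matrix.smul_mulVec, Pi.sub_apply, Pi.add_apply,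
      Pi.smul_apply, smul_eq_mul, Matrix.mulVec_diagonal, hRldef]
    ring
  have hgy : (AU β B y).mulVec y - lam • y = Ry := by
    funext i
    simp only [AU, Matrix.add_mulVec, Matrix.smul_mulVec, Pi.sub_apply, Pi.add_apply,
      Pi.smul_apply, smul_eq_mul, Matrix.mulVec_diagonal, hRydef]
    ring
  -- Jacobian action
  have hJap : ∀ z : Fin n → ℝ, ∀ i, ((JU β lam B x).mulVec z) i
      = 3 * β * (x i ^ 2 * z i) + B.mulVec z i - lam * z i := by
    intro z i
    simp only [JU, Matrix.sub_mulVec, Matrix.add_mulVec, Matrix.smul_mulVec,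
      Pi.sub_apply, Pi.add_apply, Pi.smul_apply, smul_eq_mul, Matrix.mulVec_diagonal,
      Matrix.one_mulVec]
    all_goals ring
  have hk : ∀ i, 3 * β * (x i ^ 2 * y i) + B.mulVec y i - lam * y i = 2 * β * x i ^ 3 := by
    intro i
    rw [← hJap y i]
    exact congrFun (hrec l) i
  -- Taylor identity
  have hTay : ∀ i, Ry i = β * d i ^ 2 * (y i + 2 * x i) := by
    intro i
    simp only [hRydef, hddef]
    linear_combination hk i
  -- Newton step
  have hJd : ∀ i, ((JU β lam B x).mulVec d) i = -(Rl i) := by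
    intro i
    have h1 : (JU β lam B x).mulVec d i
        = (JU β lam B x).mulVec y i - (JU β lam B x).mulVec x i := by
      have hdy : d = y - x := by
        funext j
        rw [Pi.sub_apply]
      rw [hdy, Matrix.mulVec_sub, Pi.sub_apply]
    rw [h1, hJap x i, hJap y i]
    simp only [hRldef]
    linear_combination hk i
  -- decomposition of Jacobian
  set E : Fin n → ℝ := fun i => 3 * β * x i ^ 2 - β * ustar i ^ 2 with hEdef
  set MM : Matrix (Fin n) (Fin n) ℝ :=
    AU β B ustar - lam • (1 : Matrix (Fin n) (Fin n) ℝ) with hMMdef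
  have hJdecomp : JU β lam B x = MM + Matrix.diagonal E := by
    ext i j
    by_cases hij : i = j
    · subst hij
      simp only [JU, hMMdef, AU, hEdef, Matrix.sub_apply, Matrix.add_apply, Matrix.smul_apply,
        Matrix.diagonal_apply_eq, Matrix.one_apply_eq, smul_eq_mul]
      ring
    · simp only [JU, hMMdef, AU, hEdef, Matrix.sub_apply, Matrix.add_apply, Matrix.smul_apply,
        Matrix.diagonal_apply_ne _ hij, Matrix.one_apply_ne hij, smul_eq_mul]
      ring
  -- quadratic form nonnegativity of MM
  have hsym : ∀ i j, MM i j = MM j i := by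
    intro i j
    have hBij : B i j = B j i := by
      conv_lhs => rw [← hB1]
      rfl
    by_cases hij : i = j
    · subst hij; rfl
    · simp only [hMMdef, AU, Matrix.sub_apply, Matrix.add_apply, Matrix.smul_apply,
        Matrix.diagonal_apply_ne _ hij, Matrix.diagonal_apply_ne _ (Ne.symm hij),
        Matrix.one_apply_ne hij, Matrix.one_apply_ne (Ne.symm hij), smul_eq_mul, hBij]
  have hoff : ∀ i j, i ≠ j → MM i j ≤ 0 := by
    intro i j hij
    obtain ⟨s, A, hA, -, hBeq⟩ := hB3
    have hval : MM i j = -(A i j) := by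
      simp [hMMdef, AU, Matrix.sub_apply, Matrix.add_apply, Matrix.smul_apply,
        Matrix.diagonal_apply_ne _ hij, Matrix.one_apply_ne hij, hBeq]
    rw [hval]
    linarith [hA i j]
  have heqz : ∀ i, ∑ j, MM i j * ustar j = 0 := by
    intro i
    have h1 : MM.mulVec ustar = 0 := by
      rw [hMMdef, Matrix.sub_mulVec, hstareq, Matrix.smul_mulVec, Matrix.one_mulVec,
        sub_self]
    have h2 := congrFun h1 i
    simpa [Matrix.mulVec, dotProduct] using h2
  have hquad : 0 ≤ ∑ i, ∑ j, MM i j * d i * d j :=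
    quad_nonneg MM ustar hsym hoff hstar heqz d
  -- expansion
  have hexpand : ∑ i, d i * ((JU β lam B x).mulVec d) i
      = (∑ i, ∑ j, MM i j * d i * d j) + ∑ i, E i * d i ^ 2 := by
    have hap : ∀ i, ((JU β lam B x).mulVec d) i = (∑ j, MM i j * d j) + E i * d i := by
      intro i
      rw [hJdecomp, Matrix.add_mulVec, Pi.add_apply, Matrix.mulVec_diagonal]
      congr 1
    simp_rw [hap, mul_add, Finset.sum_add_distrib, Finset.mul_sum]
    congr 1
    · exact Finset.sum_congr rfl fun i _ => Finset.sum_congr rfl fun j _ => by ring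
    · exact Finset.sum_congr rfl fun i _ => by ring
  have hsum2 : ∑ i, d i * ((JU β lam B x).mulVec d) i = ∑ i, d i * (-(Rl i)) :=
    Finset.sum_congr rfl fun i _ => by rw [hJd i]
  have hE : ∀ i, 2 * β * m ^ 2 * d i ^ 2 ≤ E i * d i ^ 2 := by
    intro i
    obtain ⟨ha, hb, hc⟩ := h i
    have h1 : m ≤ ustar i := hmle i
    have hE' : 2 * β * m ^ 2 ≤ E i := by
      simp only [hEdef]
      have e1 : m ^ 2 ≤ ustar i ^ 2 := pow_le_pow_left₀ hmpos.le h1 2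
      have e2 : ustar i ^ 2 ≤ x i ^ 2 := pow_le_pow_left₀ (hstar i).le (by linarith) 2
      nlinarith [hβ]
    nlinarith [sq_nonneg (d i)]
  have hlower : 2 * β * m ^ 2 * (∑ i, d i ^ 2) ≤ ∑ i, d i * (-(Rl i)) := by
    rw [← hsum2, hexpand]
    calc 2 * β * m ^ 2 * (∑ i, d i ^ 2) = ∑ i, 2 * β * m ^ 2 * d i ^ 2 := Finset.mul_sum _ _ _
      _ ≤ ∑ i, E i * d i ^ 2 := Finset.sum_le_sum fun i _ => hE i
      _ ≤ (∑ i, ∑ j, MM i j * d i * d j) + ∑ i, E i * d i ^ 2 := le_add_of_nonneg_left hquad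
  have hcs : ∑ i, d i * (-(Rl i)) ≤ vecNorm d * vecNorm Rl := by
    have h1 := sum_mul_le d (fun i => -(Rl i))
    have h2 : vecNorm (fun i => -(Rl i)) = vecNorm Rl := by
      unfold vecNorm
      congr 1
      exact Finset.sum_congr rfl fun i _ => by ring
    rw [h2] at h1
    exact h1
  have hdneg : ∀ i, d i < 0 := by
    intro i
    have := (h i).2.1
    simp only [hddef]
    linarith
  have hvd_pos : 0 < vecNorm d := by
    have i1 := Classical.arbitrary (Fin n)
    unfold vecNorm
    apply Real.sqrt_pos.mpr
    have h1 : 0 < d i1 ^ 2 := by nlinarith [hdneg i1]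
    exact lt_of_lt_of_le h1
      (Finset.single_le_sum (fun k _ => sq_nonneg (d k)) (Finset.mem_univ i1))
  have hS : vecNorm d ^ 2 = ∑ i, d i ^ 2 := vecNorm_sq d
  have hdle : vecNorm d ≤ vecNorm Rl / (2 * β * m ^ 2) := by
    have key : 2 * β * m ^ 2 * vecNorm d ^ 2 ≤ vecNorm d * vecNorm Rl := by
      rw [hS]; exact le_trans hlower hcs
    rw [le_div_iff₀ (by positivity)]
    nlinarith [hvd_pos, key]
  -- Lipschitz estimate at the midpoint
  set mid : Fin n → ℝ := fun i => (x i + y i) / 2 with hmiddef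
  have hbx : ∀ i, ustar i ≤ x i ∧ x i ≤ v 0 i := by
    intro i; obtain ⟨ha, hb, hc⟩ := h i; exact ⟨by linarith, le_of_lt hc⟩
  have hbmid : ∀ i, ustar i ≤ mid i ∧ mid i ≤ v 0 i := by
    intro i; obtain ⟨ha, hb, hc⟩ := h i
    constructor
    · simp only [hmiddef]; linarith
    · simp only [hmiddef]; linarith
  have hlip := hLip x mid hbx hbmid
  have hdiff : JU β lam B x - JU β lam B mid
      = Matrix.diagonal (fun i => 3 * β * (x i ^ 2 - mid i ^ 2)) := by
    ext i j
    by_cases hij : i = j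
    · subst hij
      simp only [JU, Matrix.sub_apply, Matrix.add_apply, Matrix.smul_apply,
        Matrix.diagonal_apply_eq, Matrix.one_apply_eq, smul_eq_mul]
      ring
    · simp only [JU, Matrix.sub_apply, Matrix.add_apply, Matrix.smul_apply,
        Matrix.diagonal_apply_ne _ hij, Matrix.one_apply_ne hij, smul_eq_mul]
      ring
  have hxm : (x - mid) = fun i => -(d i) / 2 := by
    funext i
    simp only [Pi.sub_apply, hmiddef, hddef]
    ring
  have hvxm : vecNorm (x - mid) = vecNorm d / 2 := by
    rw [hxm]
    unfold vecNorm
    have h1 : ∑ i, (-(d i) / 2) ^ 2 = (1 / 4) * ∑ i, d i ^ 2 := by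
      rw [Finset.mul_sum]
      exact Finset.sum_congr rfl fun i _ => by ring
    rw [h1, Real.sqrt_mul (by norm_num),
      show Real.sqrt (1 / 4) = 1 / 2 from by
        rw [show (1 / 4 : ℝ) = (1 / 2) ^ 2 by norm_num, Real.sqrt_sq (by norm_num)]]
    ring
  have hptw : ∀ i, 3 * β * (x i ^ 2 - mid i ^ 2) ≤ M₁ * (vecNorm d / 2) := by
    intro i
    calc 3 * β * (x i ^ 2 - mid i ^ 2) ≤ |3 * β * (x i ^ 2 - mid i ^ 2)| := le_abs_self _
      _ ≤ matNorm (JU β lam B x - JU β lam B mid) := by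
          rw [hdiff]
          exact matNorm_diag_ge (fun k => 3 * β * (x k ^ 2 - mid k ^ 2)) i
      _ ≤ M₁ * vecNorm (x - mid) := hlip
      _ = M₁ * (vecNorm d / 2) := by rw [hvxm]
  have hM1 : 0 ≤ M₁ := by
    have i1 := Classical.arbitrary (Fin n)
    obtain ⟨ha, hb, hc⟩ := h i1
    have h0y : 0 < y i1 := lt_trans (hstar _) ha
    have hpos : 0 < 3 * β * (x i1 ^ 2 - mid i1 ^ 2) := by
      simp only [hmiddef]
      nlinarith [mul_pos hβ (mul_pos (show (0:ℝ) < 3 * x i1 + y i1 by linarith)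
        (show (0:ℝ) < x i1 - y i1 by linarith))]
    have := hptw i1
    nlinarith [hvd_pos]
  -- pointwise residual bound
  have hRyb : ∀ i, |Ry i| ≤ (M₁ / 2 * vecNorm d) * |d i| := by
    intro i
    obtain ⟨ha, hb, hc⟩ := h i
    have h0y : 0 < y i := lt_trans (hstar i) ha
    have hdi : d i < 0 := hdneg i
    have habs : |d i| = -(d i) := abs_of_neg hdi
    have hRyi : Ry i = β * d i ^ 2 * (y i + 2 * x i) := hTay i
    have hypos : 0 < y i + 2 * x i := by linarith
    have hRypos : 0 ≤ Ry i := by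
      rw [hRyi]
      exact mul_nonneg (mul_nonneg hβ.le (sq_nonneg _)) hypos.le
    rw [abs_of_nonneg hRypos, hRyi, habs]
    have hkk := hptw i
    have key2 : β * d i ^ 2 * (y i + 2 * x i)
        ≤ (-(d i)) * (3 * β * (x i ^ 2 - mid i ^ 2)) := by
      simp only [hddef, hmiddef]
      nlinarith [mul_nonneg (mul_nonneg hβ.le (sq_nonneg (x i - y i)))
        (sub_nonneg.mpr hb.le)]
    calc β * d i ^ 2 * (y i + 2 * x i)
        ≤ (-(d i)) * (3 * β * (x i ^ 2 - mid i ^ 2)) := key2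
      _ ≤ (-(d i)) * (M₁ * (vecNorm d / 2)) :=
          mul_le_mul_of_nonneg_left hkk (by linarith)
      _ = M₁ / 2 * vecNorm d * (-(d i)) := by ring
  have hfin1 : vecNorm Ry ≤ (M₁ / 2 * vecNorm d) * vecNorm d :=
    vecNorm_le_mul (mul_nonneg (by linarith) (vecNorm_nonneg d)) hRyb
  have hsq2 : vecNorm d * vecNorm d ≤ (vecNorm Rl / (2 * β * m ^ 2)) ^ 2 := by
    nlinarith [hdle, vecNorm_nonneg d]
  rw [hgl, hgy]
  calc vecNorm Ry ≤ (M₁ / 2 * vecNorm d) * vecNorm d := hfin1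
    _ = M₁ / 2 * (vecNorm d * vecNorm d) := by ring
    _ ≤ M₁ / 2 * (vecNorm Rl / (2 * β * m ^ 2)) ^ 2 :=
        mul_le_mul_of_nonneg_left hsq2 (by linarith)
    _ = M₁ / (8 * β ^ 2 * m ^ 4) * vecNorm Rl ^ 2 := by
        have hβ' : β ≠ 0 := hβ.ne'
        have hm' : m ≠ 0 := hmpos.ne'
        field_simp
        ring_nf


theorem stmt10 {n : ℕ} [NeZero n] (B : Matrix (Fin n) (Fin n) ℝ) (β lam M₁ : ℝ)
    (hB1 : B.IsSymm) (hB2 : MatIrred B) (hB3 : IsNsMMat B) (hβ : 0 < β)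
    (hlam : smallestEig B < lam)
    (ustar : Fin n → ℝ) (hstar : ∀ i, 0 < ustar i)
    (hstareq : (AU β B ustar).mulVec ustar = lam • ustar)
    (v : ℕ → Fin n → ℝ)
    (hrec : ∀ k, (JU β lam B (v k)).mulVec (v (k + 1)) = fun i => 2 * β * (v k i) ^ 3)
    (hLip : ∀ x y : Fin n → ℝ,
      (∀ i, ustar i ≤ x i ∧ x i ≤ v 0 i) → (∀ i, ustar i ≤ y i ∧ y i ≤ v 0 i) →
      matNorm (JU β lam B x - JU β lam B y) ≤ M₁ * vecNorm (x - y)) :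
    ∀ l, (∀ i, ustar i < v (l + 1) i ∧ v (l + 1) i < v l i ∧ v l i < v 0 i) →
      vecNorm ((AU β B (v (l + 1))).mulVec (v (l + 1)) - lam • v (l + 1)) ≤
        (M₁ / (8 * β ^ 2 * (⨅ i, ustar i) ^ 4)) *
          vecNorm ((AU β B (v l)).mulVec (v l) - lam • v l) ^ 2 :=
  stmt10_aux B β lam M₁ hB1 hB2 hB3 hβ hlam ustar hstar hstareq v hrec hLip
end

section
/- Let B be a symmetric irreducible nonsingular M-matrix, β > 0, λ > λ_min(B), and let {u_l} be the monotone Newton iterates from u₀ converging to the positive solution u* with u* < u_{l+1} < u_l < u₀ componentwise. If ‖r(u_l)‖ ≥ η for all l ≤ l₀, where r(u) = β·diag(u^[2])u + Bu − λu, then l₀ ≤ ⌈(λ_max(B) + 3β·max(u₀^[2]) − λ)·‖u₀ − u*‖₁ / η⌉; i.e., the number of iterations before the residual drops below η is at most linear in ‖u₀ − u*‖₁/η. -/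
open Matrix Filter Topology

lemma eigSet_bddAbove {n : ℕ} (B : Matrix (Fin n) (Fin n) ℝ) :
    BddAbove {μ : ℝ | ∃ v : Fin n → ℝ, v ≠ 0 ∧ B.mulVec v = μ • v} := by
  refine ⟨∑ i, ∑ j, |B i j|, ?_⟩
  rintro μ ⟨w, hw, hBw⟩
  obtain ⟨i, hi⟩ := Function.ne_iff.mp hw
  obtain ⟨i₀, -, hi₀⟩ := Finset.exists_max_image Finset.univ (fun i => |w i|) ⟨i, Finset.mem_univ i⟩
  have hwi : 0 < |w i₀| := lt_of_lt_of_le (abs_pos.mpr hi) (hi₀ i (Finset.mem_univ i))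
  have h1 : μ * w i₀ = ∑ j, B i₀ j * w j := by
    have := congrFun hBw i₀
    simp [Matrix.mulVec, dotProduct] at this
    simpa using this.symm
  have key : |μ| * |w i₀| ≤ (∑ j, |B i₀ j|) * |w i₀| := by
    rw [← abs_mul, h1]
    calc |∑ j, B i₀ j * w j| ≤ ∑ j, |B i₀ j * w j| := Finset.abs_sum_le_sum_abs _ _
    _ ≤ ∑ j, |B i₀ j| * |w i₀| := by
        refine Finset.sum_le_sum fun j _ => ?_
        rw [abs_mul]
        exact mul_le_mul_of_nonneg_left (hi₀ j (Finset.mem_univ j)) (abs_nonneg _)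
    _ = (∑ j, |B i₀ j|) * |w i₀| := by rw [← Finset.sum_mul]
  have h2 : |μ| ≤ ∑ j, |B i₀ j| := le_of_mul_le_mul_right (by linarith [key]) hwi
  calc μ ≤ |μ| := le_abs_self μ
  _ ≤ ∑ j, |B i₀ j| := h2
  _ ≤ ∑ i, ∑ j, |B i j| := Finset.single_le_sum (f := fun i => ∑ j, |B i j|)
      (fun i _ => Finset.sum_nonneg fun j _ => abs_nonneg _) (Finset.mem_univ i₀)

lemma rayleigh_le' {n : ℕ} (B : Matrix (Fin n) (Fin n) ℝ) (hB : B.IsSymm) (x : Fin n → ℝ) :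
    x ⬝ᵥ B.mulVec x ≤ largestEig B * (x ⬝ᵥ x) := by
  classical
  have hH : B.IsHermitian := by
    rw [Matrix.IsHermitian, Matrix.conjTranspose_eq_transpose_of_trivial]; exact hB
  set b := hH.eigenvectorBasis with hbdef
  set μ := hH.eigenvalues with hμdef
  have hEig : ∀ i, B.mulVec ⇑(b i) = μ i • ⇑(b i) := fun i => hH.mulVec_eigenvectorBasis i
  have hdot : ∀ u w : Fin n → ℝ,
      (inner ℝ ((WithLp.equiv 2 (Fin n → ℝ)).symm u) ((WithLp.equiv 2 (Fin n → ℝ)).symm w) : ℝ)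
        = u ⬝ᵥ w := by
    intro u w
    simp [PiLp.inner_apply, PiLp.toLp_apply, dotProduct, mul_comm]
  set y := (WithLp.equiv 2 (Fin n → ℝ)).symm x with hy
  set z := (WithLp.equiv 2 (Fin n → ℝ)).symm (B.mulVec x) with hz
  set c : Fin n → ℝ := fun i => b.repr y i with hc
  have hcoe : ∀ i, (WithLp.equiv 2 (Fin n → ℝ)).symm ⇑(b i) = b i := fun i => rfl
  have hcrep : ∀ i, c i = ⇑(b i) ⬝ᵥ x := by
    intro i
    rw [hc]
    have h1 := b.repr_apply_apply y i
    have h2 := hdot ⇑(b i) x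
    rw [hcoe i] at h2
    simp only [h1]
    rw [← h2]
  have hzrep : ∀ i, b.repr z i = μ i * c i := by
    intro i
    rw [b.repr_apply_apply z i]
    have h2 := hdot ⇑(b i) (B.mulVec x)
    rw [hcoe i] at h2
    rw [show (inner ℝ (b i) z : ℝ) = ⇑(b i) ⬝ᵥ B.mulVec x from h2]
    rw [Matrix.dotProduct_mulVec, ← Matrix.mulVec_transpose, hB, hEig i,
      smul_dotProduct, hcrep i]
    rfl
  have h1 : x ⬝ᵥ B.mulVec x = ∑ i, μ i * c i ^ 2 := by
    rw [← hdot x (B.mulVec x), ← hy, ← hz, ← b.repr.inner_map_map y z]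
    rw [PiLp.inner_apply]
    refine Finset.sum_congr rfl fun i _ => ?_
    simp only [RCLike.inner_apply, starRingEnd_apply, star_trivial]
    rw [hzrep i, show b.repr y i = c i from rfl]
    ring
  have h2 : x ⬝ᵥ x = ∑ i, c i ^ 2 := by
    rw [← hdot x x, ← hy, ← b.repr.inner_map_map y y]
    rw [PiLp.inner_apply]
    refine Finset.sum_congr rfl fun i _ => ?_
    simp only [RCLike.inner_apply, starRingEnd_apply, star_trivial]
    rw [show b.repr y i = c i from rfl]; ring
  rw [h1, h2, Finset.mul_sum]
  refine Finset.sum_le_sum fun i _ => ?_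
  have hμle : μ i ≤ largestEig B := by
    apply le_csSup (eigSet_bddAbove B)
    refine ⟨⇑(b i), ?_, hEig i⟩
    have hb1 : ‖b i‖ = 1 := b.orthonormal.1 i
    intro h0
    have : (b i : EuclideanSpace ℝ (Fin n)) = 0 := by simpa using congrArg (WithLp.toLp 2) h0
    rw [this] at hb1
    simp at hb1
  exact mul_le_mul_of_nonneg_right hμle (sq_nonneg _)

lemma psd_of_z {n : ℕ} (M : Matrix (Fin n) (Fin n) ℝ) (hsym : M.IsSymm)
    (hoff : ∀ i j, i ≠ j → M i j ≤ 0) (w : Fin n → ℝ) (hw : ∀ i, 0 < w i)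
    (hMw : ∀ i, 0 ≤ M.mulVec w i) (x : Fin n → ℝ) : 0 ≤ x ⬝ᵥ M.mulVec x := by
  have hwne : ∀ i, w i ≠ 0 := fun i => (hw i).ne'
  have hT : 0 ≤ ∑ i, ∑ j, -(M i j) * (w i * w j) * (x i / w i - x j / w j)^2 := by
    refine Finset.sum_nonneg fun i _ => Finset.sum_nonneg fun j _ => ?_
    rcases eq_or_ne i j with rfl | hij
    · simp
    · have h0 := hoff i j hij
      have h1 : (0:ℝ) ≤ -(M i j) := by linarith
      have h2 : (0:ℝ) ≤ w i * w j := le_of_lt (mul_pos (hw i) (hw j))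
      exact mul_nonneg (mul_nonneg h1 h2) (sq_nonneg _)
  have hTeq : ∑ i, ∑ j, -(M i j) * (w i * w j) * (x i / w i - x j / w j)^2
      = 2 * (∑ i, ∑ j, M i j * x j * x i)
        - (∑ i, ∑ j, M i j * (x i^2 * w j / w i))
        - (∑ i, ∑ j, M i j * (x j^2 * w i / w j)) := by
    simp only [← Finset.sum_sub_distrib, Finset.mul_sum]
    refine Finset.sum_congr rfl fun i _ => Finset.sum_congr rfl fun j _ => ?_
    field_simp [hwne i, hwne j]
    ring
  have hS21 : ∑ i, ∑ j, M i j * (x j^2 * w i / w j)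
      = ∑ i, ∑ j, M i j * (x i^2 * w j / w i) := by
    rw [Finset.sum_comm]
    exact Finset.sum_congr rfl fun i _ => Finset.sum_congr rfl fun j _ => by
      rw [hsym.apply i j]
  have hS1 : 0 ≤ ∑ i, ∑ j, M i j * (x i^2 * w j / w i) := by
    refine Finset.sum_nonneg fun i _ => ?_
    have hrow : ∑ j, M i j * (x i^2 * w j / w i) = (x i^2 / w i) * (M.mulVec w i) := by
      simp only [Matrix.mulVec, dotProduct, Finset.mul_sum]
      exact Finset.sum_congr rfl fun j _ => by field_simp [hwne i, hwne j]
    rw [hrow]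
    exact mul_nonneg (div_nonneg (sq_nonneg _) (hw i).le) (hMw i)
  have hQ : x ⬝ᵥ M.mulVec x = ∑ i, ∑ j, M i j * x j * x i := by
    simp only [dotProduct, Matrix.mulVec, Finset.mul_sum]
    exact Finset.sum_congr rfl fun i _ => Finset.sum_congr rfl fun j _ => by ring
  rw [hQ]
  rw [hTeq, hS21] at hT
  linarith

open scoped MatrixOrder in
lemma opbound {n : ℕ} (M : Matrix (Fin n) (Fin n) ℝ) (hsym : M.IsSymm)
    (hpsd : ∀ x, 0 ≤ x ⬝ᵥ M.mulVec x) (C : ℝ) (hC : 0 ≤ C)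
    (hub : ∀ x, x ⬝ᵥ M.mulVec x ≤ C * (x ⬝ᵥ x)) (e : Fin n → ℝ) :
    (M.mulVec e) ⬝ᵥ (M.mulVec e) ≤ C^2 * (e ⬝ᵥ e) := by
  classical
  have hH : M.IsHermitian := by
    rw [Matrix.IsHermitian, Matrix.conjTranspose_eq_transpose_of_trivial]; exact hsym
  have hP : M.PosSemidef := Matrix.PosSemidef.of_dotProduct_mulVec_nonneg hH fun x => by simpa using hpsd x
  set S := CFC.sqrt M with hSdef
  have hSS : S * S = M := CFC.sqrt_mul_sqrt_self M hP.nonneg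
  have hSsym : Sᵀ = S := by
    have h := (CFC.sqrt_nonneg M).posSemidef.1
    rwa [Matrix.IsHermitian, Matrix.conjTranspose_eq_transpose_of_trivial] at h
  have hkey : ∀ a : Fin n → ℝ, (S.mulVec a) ⬝ᵥ (S.mulVec a) = a ⬝ᵥ M.mulVec a := by
    intro a
    rw [Matrix.dotProduct_mulVec, ← Matrix.mulVec_transpose, hSsym, Matrix.mulVec_mulVec, hSS,
      dotProduct_comm]
  have h1 : M.mulVec e = S.mulVec (S.mulVec e) := by rw [Matrix.mulVec_mulVec, hSS]
  calc (M.mulVec e) ⬝ᵥ (M.mulVec e) = (S.mulVec e) ⬝ᵥ M.mulVec (S.mulVec e) := by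
        rw [h1, hkey]
  _ ≤ C * ((S.mulVec e) ⬝ᵥ (S.mulVec e)) := hub _
  _ = C * (e ⬝ᵥ M.mulVec e) := by rw [hkey]
  _ ≤ C * (C * (e ⬝ᵥ e)) := mul_le_mul_of_nonneg_left (hub e) hC
  _ = C^2 * (e ⬝ᵥ e) := by ring

theorem stmt19 {n : ℕ} [NeZero n] (B : Matrix (Fin n) (Fin n) ℝ) (β lam η : ℝ)
    (hB1 : B.IsSymm) (hB2 : MatIrred B) (hB3 : IsNsMMat B) (hβ : 0 < β)
    (hlam : smallestEig B < lam) (hη : 0 < η)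
    (ustar : Fin n → ℝ) (hstar : ∀ i, 0 < ustar i)
    (hstareq : (AU β B ustar).mulVec ustar = lam • ustar)
    (v : ℕ → Fin n → ℝ)
    (hrec : ∀ k, (JU β lam B (v k)).mulVec (v (k + 1)) = fun i => 2 * β * (v k i) ^ 3)
    (hmono : ∀ k, ∀ i, ustar i < v (k + 1) i ∧ v (k + 1) i < v k i)
    (l₀ : ℕ)
    (hres : ∀ l, l ≤ l₀ → η ≤ vecNorm ((AU β B (v l)).mulVec (v l) - lam • v l)) :
    (l₀ : ℤ) ≤ ⌈(largestEig B + 3 * β * (⨆ i, (v 0 i) ^ 2) - lam) *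
      vecNorm1 (v 0 - ustar) / η⌉ := by
  classical
  obtain ⟨s, A, hA, hsA, hBeq⟩ := hB3
  have hpos : ∀ l i, ustar i < v l i := by
    intro l i
    cases l with
    | zero => exact lt_trans (hmono 0 i).1 (hmono 0 i).2
    | succ k => exact (hmono k i).1
  have hvpos : ∀ l i, 0 < v l i := fun l i => lt_trans (hstar i) (hpos l i)
  have hv0 : ∀ l i, v l i ≤ v 0 i := by
    intro l i
    induction l with
    | zero => exact le_refl _
    | succ k ih => exact le_of_lt (lt_of_lt_of_le (hmono k i).2 ih)
  have hSle : ∀ l i, (v l i)^2 ≤ ⨆ i, (v 0 i)^2 := by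
    intro l i
    have h1 : (v l i)^2 ≤ (v 0 i)^2 := pow_le_pow_left₀ (hvpos l i).le (hv0 l i) 2
    exact le_trans h1 (le_ciSup (f := fun i => (v 0 i)^2) (Set.Finite.bddAbove (Set.finite_range _)) i)
  set S := ⨆ i, (v 0 i)^2 with hSdef
  set L := largestEig B with hLdef
  set C := L + 3 * β * S - lam with hCdef
  have hBoff : ∀ i j, i ≠ j → B i j ≤ 0 := by
    intro i j hij
    rw [hBeq]
    simp only [Matrix.sub_apply, Matrix.smul_apply, Matrix.one_apply_ne hij, smul_eq_mul,
      mul_zero, zero_sub, neg_nonpos]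
    exact hA i j
  have hMsym : ∀ l, (JU β lam B (v l)).IsSymm := by
    intro l
    unfold JU
    rw [Matrix.IsSymm, Matrix.transpose_sub, Matrix.transpose_add, Matrix.transpose_smul,
      Matrix.diagonal_transpose, Matrix.transpose_smul, Matrix.transpose_one, hB1]
  have hMoff : ∀ l i j, i ≠ j → (JU β lam B (v l)) i j ≤ 0 := by
    intro l i j hij
    unfold JU
    simp only [Matrix.sub_apply, Matrix.add_apply, Matrix.smul_apply,
      Matrix.diagonal_apply_ne _ hij, Matrix.one_apply_ne hij, smul_eq_mul, mul_zero,
      add_zero, zero_add, sub_zero]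
    exact hBoff i j hij
  have hMapply : ∀ u x, (JU β lam B u).mulVec x
      = fun i => 3*β*((u i)^2 * x i) + (B.mulVec x) i - lam * x i := by
    intro u x
    funext i
    unfold JU
    rw [Matrix.sub_mulVec, Matrix.add_mulVec, Matrix.smul_mulVec,
      Matrix.smul_mulVec, Matrix.one_mulVec]
    simp [Matrix.mulVec_diagonal]
  have hstar' : ∀ i, β * ((ustar i)^2 * ustar i) + (B.mulVec ustar) i = lam * ustar i := by
    intro i
    have h := congrFun hstareq i
    unfold AU at h
    rw [Matrix.add_mulVec, Matrix.smul_mulVec] at h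
    simpa [Matrix.mulVec_diagonal] using h
  have hMw : ∀ l i, 0 ≤ (JU β lam B (v l)).mulVec ustar i := by
    intro l i
    rw [hMapply]
    have h3 : (ustar i)^2 ≤ (v l i)^2 := pow_le_pow_left₀ (hstar i).le (hpos l i).le 2
    have h4 := hstar' i
    show (0:ℝ) ≤ 3*β*((v l i)^2 * ustar i) + (B.mulVec ustar) i - lam * ustar i
    nlinarith [hstar i, hβ, mul_nonneg (sub_nonneg.mpr h3) (hstar i).le,
      mul_pos (mul_pos hβ (mul_pos (hstar i) (hstar i))) (hstar i)]
  have hpsd : ∀ l x, 0 ≤ x ⬝ᵥ (JU β lam B (v l)).mulVec x := fun l x =>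
    psd_of_z _ (hMsym l) (hMoff l) ustar hstar (hMw l) x
  have hub : ∀ l x, x ⬝ᵥ (JU β lam B (v l)).mulVec x ≤ C * (x ⬝ᵥ x) := by
    intro l x
    rw [hMapply]
    have expand : x ⬝ᵥ (fun i => 3*β*((v l i)^2 * x i) + (B.mulVec x) i - lam * x i)
        = (∑ i, 3*β*((v l i)^2 * (x i * x i))) + x ⬝ᵥ B.mulVec x - lam * (x ⬝ᵥ x) := by
      simp only [dotProduct, mul_add, mul_sub, Finset.sum_add_distrib,
        Finset.sum_sub_distrib, Finset.mul_sum]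
      congr 1
      · congr 1
        exact Finset.sum_congr rfl fun i _ => by ring
      · exact Finset.sum_congr rfl fun i _ => by ring
    rw [expand]
    have e2 : (∑ i, 3*β*((v l i)^2 * (x i * x i))) ≤ ∑ i, 3*β*(S * (x i * x i)) := by
      refine Finset.sum_le_sum fun i _ => ?_
      have h6 := mul_le_mul_of_nonneg_right (hSle l i) (mul_self_nonneg (x i))
      have h5 := mul_le_mul_of_nonneg_left h6 (by positivity : (0:ℝ) ≤ 3*β)
      linarith [h5]
    have e2' : (∑ i, 3*β*(S * (x i * x i))) = 3*β*S * (x ⬝ᵥ x) := by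
      rw [dotProduct, Finset.mul_sum]
      exact Finset.sum_congr rfl fun i _ => by ring
    have e3 : x ⬝ᵥ B.mulVec x ≤ L * (x ⬝ᵥ x) := rayleigh_le' B hB1 x
    rw [e2'] at e2
    rw [hCdef]
    linarith
  have hC0 : 0 ≤ C := by
    set x1 : Fin n → ℝ := fun _ => (1:ℝ) with hx1
    have h1 := hpsd 0 x1
    have h2 := hub 0 x1
    have hx : x1 ⬝ᵥ x1 = (n : ℝ) := by simp [dotProduct, hx1]
    rw [hx] at h2
    have hn : (0:ℝ) < n := by
      have := Nat.pos_of_ne_zero (NeZero.ne n)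
      exact_mod_cast this
    nlinarith [le_trans h1 h2]
  have hres' : ∀ l, (AU β B (v l)).mulVec (v l) - lam • v l
      = (JU β lam B (v l)).mulVec (fun i => v l i - v (l+1) i) := by
    intro l
    have hlin : (JU β lam B (v l)).mulVec (fun i => v l i - v (l+1) i)
        = (JU β lam B (v l)).mulVec (v l) - (JU β lam B (v l)).mulVec (v (l+1)) := by
      rw [show (fun i => v l i - v (l+1) i) = v l - v (l+1) from rfl, Matrix.mulVec_sub]
    rw [hlin, hrec l, hMapply]
    funext i
    unfold AU
    rw [Matrix.add_mulVec, Matrix.smul_mulVec]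
    simp only [Pi.sub_apply, Pi.add_apply, Pi.smul_apply, smul_eq_mul, Matrix.mulVec_diagonal]
    ring
  have hstep : ∀ l, l ≤ l₀ → η ≤ C * ∑ i, (v l i - v (l+1) i) := by
    intro l hl
    have h0 := hres l hl
    set e : Fin n → ℝ := fun i => v l i - v (l+1) i with he
    have henn : ∀ i, 0 ≤ e i := by
      intro i
      have := (hmono l i).2
      simp only [he]
      linarith
    have hb : ((JU β lam B (v l)).mulVec e) ⬝ᵥ ((JU β lam B (v l)).mulVec e)
        ≤ C^2 * (e ⬝ᵥ e) :=
      opbound _ (hMsym l) (hpsd l) C hC0 (hub l) e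
    have hd1 : ∀ u : Fin n → ℝ, (∑ i, u i ^2) = u ⬝ᵥ u := by
      intro u
      simp [dotProduct, sq]
    have hnorm : vecNorm ((JU β lam B (v l)).mulVec e) ≤ C * vecNorm e := by
      unfold vecNorm
      calc Real.sqrt (∑ i, ((JU β lam B (v l)).mulVec e) i ^2)
          ≤ Real.sqrt (C^2 * (e ⬝ᵥ e)) := Real.sqrt_le_sqrt (by rw [hd1]; exact hb)
      _ = C * Real.sqrt (e ⬝ᵥ e) := by
          rw [Real.sqrt_mul (sq_nonneg C), Real.sqrt_sq hC0]
      _ = C * Real.sqrt (∑ i, e i ^2) := by rw [hd1]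
    have h2 : vecNorm e ≤ ∑ i, e i := by
      unfold vecNorm
      have h3 : ∑ i, e i ^ 2 ≤ (∑ i, e i)^2 :=
        Finset.sum_sq_le_sq_sum_of_nonneg (fun i _ => henn i)
      calc Real.sqrt (∑ i, e i^2) ≤ Real.sqrt ((∑ i, e i)^2) := Real.sqrt_le_sqrt h3
      _ = ∑ i, e i := Real.sqrt_sq (Finset.sum_nonneg fun i _ => henn i)
    calc η ≤ vecNorm ((AU β B (v l)).mulVec (v l) - lam • v l) := h0
    _ = vecNorm ((JU β lam B (v l)).mulVec e) := by rw [hres' l]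
    _ ≤ C * vecNorm e := hnorm
    _ ≤ C * ∑ i, e i := mul_le_mul_of_nonneg_left h2 hC0
  have hsum : ((l₀:ℝ) + 1) * η ≤ C * vecNorm1 (v 0 - ustar) := by
    have h1 : ((l₀:ℝ)+1) * η = ∑ _l ∈ Finset.range (l₀+1), η := by
      rw [Finset.sum_const, Finset.card_range]
      push_cast
      ring
    rw [h1]
    calc ∑ l ∈ Finset.range (l₀+1), η
        ≤ ∑ l ∈ Finset.range (l₀+1), C * ∑ i, (v l i - v (l+1) i) :=
          Finset.sum_le_sum fun l hl => hstep l (by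
            have := Finset.mem_range.mp hl; omega)
    _ = C * ∑ i, (v 0 i - v (l₀+1) i) := by
        rw [← Finset.mul_sum, Finset.sum_comm]
        congr 1
        exact Finset.sum_congr rfl fun i _ => Finset.sum_range_sub' (fun l => v l i) (l₀+1)
    _ ≤ C * ∑ i, (v 0 i - ustar i) := by
        refine mul_le_mul_of_nonneg_left (Finset.sum_le_sum fun i _ => ?_) hC0
        have := hpos (l₀+1) i
        linarith
    _ = C * vecNorm1 (v 0 - ustar) := by
        unfold vecNorm1
        congr 1
        refine Finset.sum_congr rfl fun i _ => ?_
        rw [Pi.sub_apply, abs_of_nonneg]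
        have := hpos 0 i
        linarith
  have hfin : (l₀ : ℝ) ≤ C * vecNorm1 (v 0 - ustar) / η := by
    rw [le_div_iff₀ hη]
    nlinarith
  calc (l₀ : ℤ) = ⌈(l₀ : ℝ)⌉ := (Int.ceil_natCast l₀).symm
  _ ≤ ⌈C * vecNorm1 (v 0 - ustar) / η⌉ := Int.ceil_le_ceil hfin
end
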